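/- Let m₀, m₀' ∈ L^∞(𝕋) be non-singular, let h, h' ∈ L¹(𝕋) with h, h' ≥ 0, R_{m₀,m₀}h = h and R_{m₀',m₀'}h' = h', and let (π, U, H, φ) and (π', U', H', φ') be cyclic representations associated to h (with filter m₀) and to h' (with filter m₀') respectively. If h₀ ∈ L¹(𝕋) satisfies R_{m₀,m₀'}h₀ = h₀ and |h₀|² ≤ c·h·h' μ-a.e. for some constant c > 0, then there exists a unique bounded linear operator S : H' → H such that S U' = U S, S π'(f) = π(f) S for all f ∈ L^∞(𝕋), and ⟨φ, π(f) S φ'⟩ = ∫_𝕋 f h₀ dμ for all f ∈ L^∞(𝕋); moreover ‖S‖ ≤ √c. -/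

import Mathlib

noncomputable section

open MeasureTheory Complex
open scoped ComplexConjugate ComplexInnerProductSpace

/-- An element of `L^∞(𝕋)`, realized as a bounded measurable 2π-periodic function on ℝ. -/
def IsFilter (f : ℝ → ℂ) : Prop :=
  Measurable f ∧ (∃ C : ℝ, ∀ x, ‖f x‖ ≤ C) ∧ ∀ x, f (x + 2 * Real.pi) = f x

/-- `m₀` is non-singular: it does not vanish on a set of positive measure. -/
def NonSingular (m : ℝ → ℂ) : Prop := ∀ᵐ x ∂(volume : Measure ℝ), m x ≠ 0

/-- The Ruelle transfer operator `R_{m₀,m₀'}` at scale `N`, written for 2π-periodic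
functions on ℝ. -/
def ruelle (N : ℕ) (m₀ m₀' : ℝ → ℂ) (f : ℝ → ℂ) : ℝ → ℂ := fun ω =>
  (N : ℂ)⁻¹ * ∑ l ∈ Finset.range N,
    conj (m₀ ((ω + 2 * Real.pi * l) / N)) * m₀' ((ω + 2 * Real.pi * l) / N) *
      f ((ω + 2 * Real.pi * l) / N)

/-- `h ∈ L¹(𝕋)`, as a 2π-periodic locally integrable function on ℝ. -/
def MemL1T (f : ℝ → ℂ) : Prop :=
  MeasureTheory.IntegrableOn f (Set.Ioc 0 (2 * Real.pi)) volume ∧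
    ∀ x, f (x + 2 * Real.pi) = f x

/-- The normalized integral over the circle: `∫_𝕋 f dμ = (2π)⁻¹ ∫_0^{2π} f`. -/
def circleInt (f : ℝ → ℂ) : ℂ :=
  (((2 * Real.pi)⁻¹ : ℝ) : ℂ) * ∫ x in Set.Ioc (0:ℝ) (2 * Real.pi), f x

/-- A (normal) covariant representation of the algebra `𝔄_N`: a unitary `U` on a complex
Hilbert space `H` together with a unital *-representation `rep` of `L^∞(𝕋)` satisfying
`U rep(f) U⁻¹ = rep(f(z^N))`. -/
structure CovRep (N : ℕ) (H : Type*) [NormedAddCommGroup H] [InnerProductSpace ℂ H]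
    [CompleteSpace H] where
  U : H ≃ₗᵢ[ℂ] H
  rep : (ℝ → ℂ) → H →L[ℂ] H
  rep_one : rep 1 = 1
  rep_add : ∀ f g, IsFilter f → IsFilter g → rep (f + g) = rep f + rep g
  rep_smul : ∀ (c : ℂ) (f), IsFilter f → rep (c • f) = c • rep f
  rep_mul : ∀ f g, IsFilter f → IsFilter g → rep (f * g) = (rep f).comp (rep g)
  rep_star : ∀ f, IsFilter f →
    rep (fun x => conj (f x)) = ContinuousLinearMap.adjoint (rep f)
  covariant : ∀ f, IsFilter f → ∀ v : H, U (rep f v) = rep (fun x => f ((N : ℝ) * x)) (U v)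

/-- The cyclic representation of `𝔄_N` associated to an eigenfunction `h ≥ 0`,
`R_{m₀,m₀}h = h`: a covariant representation with a cyclic vector `phi` satisfying the
scaling relation `U phi = rep(m₀) phi` and `⟪phi, rep(f) phi⟫ = ∫_𝕋 f h dμ`. -/
structure CyclicRep (N : ℕ) (m₀ : ℝ → ℂ) (h : ℝ → ℝ) (H : Type*) [NormedAddCommGroup H]
    [InnerProductSpace ℂ H] [CompleteSpace H] extends CovRep N H where
  phi : H
  scaling : U phi = rep m₀ phi
  moment : ∀ f, IsFilter f → ⟪phi, rep f phi⟫ = circleInt fun x => f x * (h x : ℂ)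
  cyclic : Dense (Submodule.span ℂ
    {v : H | ∃ (n : ℕ) (f : ℝ → ℂ), IsFilter f ∧
      v = (fun w => U.symm w)^[n] (rep f phi)} : Set H)

/-! ### Auxiliary lemmas on filters -/

section FilterAux

lemma IsFilter.periodN {f : ℝ → ℂ} (hf : IsFilter f) (k : ℕ) (x : ℝ) :
    f (x + 2 * Real.pi * k) = f x := by
  induction k with
  | zero => simp
  | succ n ih =>
    have : x + 2 * Real.pi * (n + 1 : ℕ) = (x + 2 * Real.pi * n) + 2 * Real.pi := by
      push_cast; ring
    rw [this, hf.2.2, ih]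

lemma isFilter_one : IsFilter (1 : ℝ → ℂ) :=
  ⟨measurable_const, ⟨1, fun _ => by simp⟩, fun _ => rfl⟩

lemma isFilter_zero : IsFilter (0 : ℝ → ℂ) :=
  ⟨measurable_const, ⟨0, fun _ => by simp⟩, fun _ => rfl⟩

lemma IsFilter.add {f g : ℝ → ℂ} (hf : IsFilter f) (hg : IsFilter g) : IsFilter (f + g) := by
  obtain ⟨Cf, hCf⟩ := hf.2.1
  obtain ⟨Cg, hCg⟩ := hg.2.1
  exact ⟨hf.1.add hg.1, ⟨Cf + Cg, fun x => (norm_add_le _ _).trans (add_le_add (hCf x) (hCg x))⟩,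
    fun x => by simp only [Pi.add_apply, hf.2.2 x, hg.2.2 x]⟩

lemma IsFilter.mul {f g : ℝ → ℂ} (hf : IsFilter f) (hg : IsFilter g) : IsFilter (f * g) := by
  obtain ⟨Cf, hCf⟩ := hf.2.1
  obtain ⟨Cg, hCg⟩ := hg.2.1
  have hCf0 : 0 ≤ Cf := le_trans (norm_nonneg _) (hCf 0)
  refine ⟨hf.1.mul hg.1, ⟨Cf * Cg, fun x => ?_⟩,
    fun x => by simp only [Pi.mul_apply, hf.2.2 x, hg.2.2 x]⟩
  calc ‖f x * g x‖ = ‖f x‖ * ‖g x‖ := norm_mul _ _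
  _ ≤ Cf * Cg := mul_le_mul (hCf x) (hCg x) (norm_nonneg _) hCf0

lemma IsFilter.smul {f : ℝ → ℂ} (c : ℂ) (hf : IsFilter f) : IsFilter (c • f) := by
  obtain ⟨Cf, hCf⟩ := hf.2.1
  have hCf0 : 0 ≤ Cf := le_trans (norm_nonneg _) (hCf 0)
  refine ⟨hf.1.const_smul c, ⟨‖c‖ * Cf, fun x => ?_⟩,
    fun x => by simp only [Pi.smul_apply, hf.2.2 x]⟩
  calc ‖(c • f) x‖ = ‖c‖ * ‖f x‖ := by simp [norm_smul]
  _ ≤ ‖c‖ * Cf := by gcongr; exact hCf x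

lemma IsFilter.conj {f : ℝ → ℂ} (hf : IsFilter f) :
    IsFilter (fun x => (starRingEnd ℂ) (f x)) := by
  obtain ⟨Cf, hCf⟩ := hf.2.1
  exact ⟨(Complex.continuous_conj.measurable).comp hf.1, ⟨Cf, fun x => by simpa using hCf x⟩,
    fun x => by simp [hf.2.2 x]⟩

/-- Dilation by `N^k`. -/
def dilp (N : ℕ) (k : ℕ) (f : ℝ → ℂ) : ℝ → ℂ := fun x => f ((N : ℝ) ^ k * x)

lemma isFilter_dilp {N k : ℕ} {f : ℝ → ℂ} (hf : IsFilter f) : IsFilter (dilp N k f) := by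
  obtain ⟨Cf, hCf⟩ := hf.2.1
  refine ⟨hf.1.comp (measurable_const_mul _), ⟨Cf, fun x => hCf _⟩, fun x => ?_⟩
  show f ((N:ℝ)^k * (x + 2 * Real.pi)) = f ((N:ℝ)^k * x)
  have : (N:ℝ)^k * (x + 2 * Real.pi) = (N:ℝ)^k * x + 2 * Real.pi * (N ^ k : ℕ) := by
    push_cast; ring
  rw [this, hf.periodN]

/-- The lifting map `f ↦ (f ∘ N·) * m`. -/
def Lam (N : ℕ) (m : ℝ → ℂ) (f : ℝ → ℂ) : ℝ → ℂ := fun x => f ((N : ℝ) * x) * m x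

lemma isFilter_Lam {N : ℕ} {m f : ℝ → ℂ} (hm : IsFilter m) (hf : IsFilter f) :
    IsFilter (Lam N m f) := by
  have h1 : IsFilter (dilp N 1 f) := isFilter_dilp hf
  have : Lam N m f = dilp N 1 f * m := by
    funext x; simp [Lam, dilp, pow_one]
  rw [this]; exact h1.mul hm

lemma isFilter_LamIter {N : ℕ} {m f : ℝ → ℂ} (hm : IsFilter m) (hf : IsFilter f) (k : ℕ) :
    IsFilter ((Lam N m)^[k] f) := by
  induction k with
  | zero => simpa
  | succ n ih => rw [Function.iterate_succ_apply']; exact isFilter_Lam hm ih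

lemma Lam_add (N : ℕ) (m f g : ℝ → ℂ) : Lam N m (f + g) = Lam N m f + Lam N m g := by
  funext x; simp [Lam, add_mul]

lemma Lam_smul (N : ℕ) (m : ℝ → ℂ) (c : ℂ) (f : ℝ → ℂ) :
    Lam N m (c • f) = c • Lam N m f := by
  funext x; simp [Lam, mul_assoc]

lemma LamIter_add (N : ℕ) (m : ℝ → ℂ) (k : ℕ) (f g : ℝ → ℂ) :
    (Lam N m)^[k] (f + g) = (Lam N m)^[k] f + (Lam N m)^[k] g := by
  induction k generalizing f g with
  | zero => simp
  | succ n ih =>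
    rw [Function.iterate_succ_apply, Function.iterate_succ_apply, Function.iterate_succ_apply,
      Lam_add, ih]

lemma LamIter_smul (N : ℕ) (m : ℝ → ℂ) (k : ℕ) (c : ℂ) (f : ℝ → ℂ) :
    (Lam N m)^[k] (c • f) = c • (Lam N m)^[k] f := by
  induction k generalizing f with
  | zero => simp
  | succ n ih =>
    rw [Function.iterate_succ_apply, Function.iterate_succ_apply, Lam_smul, ih]

lemma Lam_mul_dil (N : ℕ) (m u w : ℝ → ℂ) :
    Lam N m (u * w) = dilp N 1 u * Lam N m w := by
  funext x; simp [Lam, dilp, pow_one]; ring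

lemma LamIter_mul_dilp (N : ℕ) (m : ℝ → ℂ) (k : ℕ) (u w : ℝ → ℂ) :
    (Lam N m)^[k] (u * w) = dilp N k u * (Lam N m)^[k] w := by
  induction k generalizing u w with
  | zero => funext x; simp [dilp]
  | succ n ih =>
    rw [Function.iterate_succ_apply, Function.iterate_succ_apply, Lam_mul_dil, ih]
    funext x
    simp only [Pi.mul_apply, dilp, mul_eq_mul_right_iff]
    left
    congr 1
    push_cast
    ring

end FilterAux
/-! ### Hilbert space helpers -/

section HilbertAux

variable {E : Type*} [NormedAddCommGroup E] [InnerProductSpace ℂ E]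

lemma dense_eq_of_inner {s : Set E} (hs : Dense s) {v w : E}
    (hvw : ∀ x ∈ s, ⟪x, v⟫ = ⟪x, w⟫) : v = w := by
  have hall : ∀ x : E, ⟪x, v⟫ = ⟪x, w⟫ := by
    have hc : IsClosed {x : E | ⟪x, v⟫ = ⟪x, w⟫} :=
      isClosed_eq (continuous_id.inner continuous_const) (continuous_id.inner continuous_const)
    intro x
    have : x ∈ closure s := hs x
    exact hc.closure_subset ((closure_mono (fun y hy => hvw y hy)) this)
  have h0 : ⟪v - w, v - w⟫ = 0 := by
    rw [inner_sub_right, hall (v - w)]; ring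
  rwa [inner_self_eq_zero, sub_eq_zero] at h0

lemma extend_dense_clm {F : Type*} [NormedAddCommGroup F] [NormedSpace ℂ F] [CompleteSpace F]
    (G : Submodule ℂ E) (hG : Dense (G : Set E)) (L : G →ₗ[ℂ] F) (C : ℝ) (hC : 0 ≤ C)
    (hL : ∀ ξ : G, ‖L ξ‖ ≤ C * ‖(ξ : E)‖) :
    ∃ T : E →L[ℂ] F, (∀ ξ : G, T ξ = L ξ) ∧ ‖T‖ ≤ C := by
  have hLb : ∀ ξ : G, ‖L ξ‖ ≤ C * ‖ξ‖ := hL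
  let Lc : G →L[ℂ] F := L.mkContinuous C hLb
  let e : G →L[ℂ] E := G.subtypeL
  have hd : DenseRange (⇑e) := by
    have : Set.range (⇑e) = (G : Set E) := Subtype.range_coe
    rw [DenseRange, this]; exact hG
  have hiso : Isometry (⇑e) := AddMonoidHomClass.isometry_of_norm _ (fun x => rfl)
  have hui : IsUniformInducing (⇑e) := hiso.isUniformInducing
  refine ⟨Lc.extend e, fun ξ => ?_, ?_⟩
  · exact ContinuousLinearMap.extend_eq Lc hd hui ξ
  · have h1 : ∀ x : G, ‖x‖ ≤ (1 : NNReal) * ‖e x‖ := fun x => by simp [e]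
    have := ContinuousLinearMap.opNorm_extend_le Lc hd h1
    simp only [NNReal.coe_one, one_mul] at this
    exact this.trans (L.mkContinuous_norm_le hC hLb)

end HilbertAux
/-! ### Measure theory helpers -/

section MeasureAux

open intervalIntegral

lemma periodic_intervalIntegrable {f : ℝ → ℂ} {T : ℝ} (hp : Function.Periodic f T)
    (hT : 0 < T) (h0 : IntervalIntegrable f volume 0 T) :
    ∀ a b : ℝ, IntervalIntegrable f volume a b := by
  have hn : ∀ n : ℕ, IntervalIntegrable f volume 0 (n * T) := by
    intro n
    induction n with
    | zero => simp
    | succ n ih =>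
      refine ih.trans ?_
      have hseg : IntervalIntegrable (fun x => f (x + -(n * T))) volume
          (0 - (-(n * T))) (T - (-(n * T))) := h0.comp_add_right (-(n * T))
      have heq : (fun x => f (x + -(n * T))) = f := by
        funext x
        rw [← sub_eq_add_neg]
        exact hp.sub_nat_mul_eq n
      rw [heq] at hseg
      have e1 : (0 : ℝ) - (-(n * T)) = n * T := by ring
      have e2 : T - (-(n * T)) = (n + 1 : ℕ) * T := by push_cast; ring
      rwa [e1, e2] at hseg
  have hneg : ∀ n : ℕ, IntervalIntegrable f volume (-(n * T)) 0 := by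
    intro n
    have hseg : IntervalIntegrable (fun x => f (x + n * T)) volume
        (0 - n * T) ((n * T) - n * T) := (hn n).comp_add_right (n * T)
    have heq : (fun x => f (x + n * T)) = f := by
      funext x; exact (hp.nat_mul n) x
    rw [heq] at hseg
    have e1 : (0 : ℝ) - n * T = -(n * T) := by ring
    have e2 : (n * T : ℝ) - n * T = 0 := by ring
    rwa [e1, e2] at hseg
  intro a b
  obtain ⟨n, hnn⟩ := exists_nat_ge (max |a| |b| / T)
  have hmax : max |a| |b| ≤ n * T := by
    rw [div_le_iff₀ hT] at hnn; linarith
  have hint : IntervalIntegrable f volume (-(n * T)) (n * T) := (hneg n).trans (hn n)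
  refine hint.mono_set ?_
  have hnT : -(n * T : ℝ) ≤ n * T := by
    have : (0:ℝ) ≤ n * T := by positivity
    linarith
  have hmem : ∀ x : ℝ, |x| ≤ max |a| |b| → x ∈ Set.uIcc (-(n * T)) (n * T) := by
    intro x hx
    rw [Set.uIcc_of_le hnT]
    have := hx.trans hmax
    rw [abs_le] at this
    exact ⟨this.1, this.2⟩
  exact Set.uIcc_subset_uIcc (hmem a (le_max_left _ _)) (hmem b (le_max_right _ _))

/-- Cauchy–Schwarz for integrals of nonnegative real functions. -/
lemma integral_cauchy_schwarz {X : Type*} [MeasurableSpace X] (μ : Measure X) {u v : X → ℝ}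
    (hu : AEStronglyMeasurable u μ) (hv : AEStronglyMeasurable v μ)
    (hu0 : 0 ≤ᵐ[μ] u) (hv0 : 0 ≤ᵐ[μ] v)
    (hu2 : MeasureTheory.Integrable (fun x => u x ^ 2) μ)
    (hv2 : MeasureTheory.Integrable (fun x => v x ^ 2) μ) :
    ∫ x, u x * v x ∂μ ≤ Real.sqrt (∫ x, u x ^ 2 ∂μ) * Real.sqrt (∫ x, v x ^ 2 ∂μ) := by
  have hpq : Real.HolderConjugate 2 2 := Real.HolderConjugate.two_two
  have h2 : ENNReal.ofReal (2:ℝ) = 2 := by simp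
  have hMu : MemLp u (ENNReal.ofReal (2:ℝ)) μ := by
    rw [h2]; exact (memLp_two_iff_integrable_sq hu).2 hu2
  have hMv : MemLp v (ENNReal.ofReal (2:ℝ)) μ := by
    rw [h2]; exact (memLp_two_iff_integrable_sq hv).2 hv2
  have := MeasureTheory.integral_mul_le_Lp_mul_Lq_of_nonneg hpq hu0 hv0 hMu hMv
  have hconv : ∀ w : X → ℝ, (∫ x, w x ^ (2:ℝ) ∂μ) ^ (1/(2:ℝ)) =
      Real.sqrt (∫ x, w x ^ 2 ∂μ) := by
    intro w
    rw [Real.sqrt_eq_rpow]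
    congr 1
    refine integral_congr_ae (Filter.Eventually.of_forall fun x => ?_)
    show w x ^ (2:ℝ) = w x ^ (2:ℕ)
    rw [show (2:ℝ) = ((2:ℕ):ℝ) by norm_num, Real.rpow_natCast]
  rw [hconv u, hconv v] at this
  exact this

end MeasureAux
/-! ### The key periodization identity -/

section Per

open intervalIntegral

lemma filter_mul_intervalIntegrable {h₀ : ℝ → ℂ} (hh₀1 : MemL1T h₀)
    {p : ℝ → ℂ} (hp : IsFilter p) :
    ∀ a b : ℝ, IntervalIntegrable (fun x => p x * h₀ x) volume a b := by
  have hT : 0 < 2 * Real.pi := by positivity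
  have hper : Function.Periodic (fun x => p x * h₀ x) (2 * Real.pi) := fun x => by
    simp only [hp.2.2 x, hh₀1.2 x]
  have hint : IntegrableOn (fun x => p x * h₀ x) (Set.Ioc 0 (2*Real.pi)) volume :=
    hh₀1.1.bdd_mul hp.1.aestronglyMeasurable (c := hp.2.1.choose)
      (Filter.Eventually.of_forall hp.2.1.choose_spec)
  have h0T : IntervalIntegrable (fun x => p x * h₀ x) volume 0 (2*Real.pi) := by
    rw [intervalIntegrable_iff, Set.uIoc_of_le hT.le]; exact hint
  exact periodic_intervalIntegrable hper hT h0T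

lemma h₀_intervalIntegrable {h₀ : ℝ → ℂ} (hh₀1 : MemL1T h₀) :
    ∀ a b : ℝ, IntervalIntegrable h₀ volume a b := by
  have := filter_mul_intervalIntegrable hh₀1 isFilter_one
  simpa using this

lemma per {N : ℕ} (hN : 1 ≤ N) {m₀ m₀' h₀ : ℝ → ℂ} (hm₀ : IsFilter m₀) (hm₀' : IsFilter m₀')
    (hh₀1 : MemL1T h₀)
    (hh₀eig : ∀ᵐ ω ∂(volume : Measure ℝ), ruelle N m₀ m₀' h₀ ω = h₀ ω)
    {F : ℝ → ℂ} (hF : IsFilter F) :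
    ∫ x in Set.Ioc (0:ℝ) (2*Real.pi), F ((N:ℝ)*x) * (conj (m₀ x) * m₀' x * h₀ x)
      = ∫ x in Set.Ioc (0:ℝ) (2*Real.pi), F x * h₀ x := by
  have hT : (0:ℝ) < 2*Real.pi := by positivity
  have hNpos : 0 < (N:ℝ) := by exact_mod_cast Nat.lt_of_lt_of_le Nat.zero_lt_one hN
  have hN0 : ((N:ℝ)) ≠ 0 := ne_of_gt hNpos
  have hq : IsFilter (fun x => F ((N:ℝ)*x) * (conj (m₀ x) * m₀' x)) := by
    have he : (fun x => F ((N:ℝ)*x) * (conj (m₀ x) * m₀' x))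
        = dilp N 1 F * ((fun x => conj (m₀ x)) * m₀') := by
      funext x; simp [dilp, pow_one]
    rw [he]; exact (isFilter_dilp hF).mul (hm₀.conj.mul hm₀')
  set Φ : ℝ → ℂ := fun x => (F ((N:ℝ)*x) * (conj (m₀ x) * m₀' x)) * h₀ x with hΦ
  have hΦint : ∀ a b, IntervalIntegrable Φ volume a b :=
    filter_mul_intervalIntegrable hh₀1 hq
  set term : ℕ → ℝ → ℂ := fun l ω =>
    F ω * (conj (m₀ ((ω + 2*Real.pi*l) / N)) * m₀' ((ω + 2*Real.pi*l) / N)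
      * h₀ ((ω + 2*Real.pi*l) / N)) with hterm
  have lhs_eq : ∫ x in Set.Ioc (0:ℝ) (2*Real.pi), F ((N:ℝ)*x) * (conj (m₀ x) * m₀' x * h₀ x)
      = ∫ x in (0:ℝ)..(2*Real.pi), Φ x := by
    rw [integral_of_le hT.le]
    refine setIntegral_congr_fun measurableSet_Ioc (fun x _ => ?_)
    simp only [hΦ]; ring
  set a : ℕ → ℝ := fun l => l * (2*Real.pi) / N with ha
  have hsplit : ∑ l ∈ Finset.range N, ∫ x in a l..a (l+1), Φ x
      = ∫ x in (0:ℝ)..(2*Real.pi), Φ x := by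
    have hs := sum_integral_adjacent_intervals (μ := volume) (a := a) (n := N)
      (fun k _ => hΦint _ _)
    have ha0 : a 0 = 0 := by simp [ha]
    have haN : a N = 2*Real.pi := by simp only [ha]; rw [mul_div_cancel_left₀ _ hN0]
    rwa [ha0, haN] at hs
  have piece : ∀ l : ℕ, ∫ x in a l..a (l+1), Φ x
      = ((N:ℝ)⁻¹) • ∫ ω in (0:ℝ)..(2*Real.pi), term l ω := by
    intro l
    have hsub := integral_comp_div (a := (l:ℝ)*(2*Real.pi)) (b := ((l:ℝ)+1)*(2*Real.pi))
      (c := (N:ℝ)) (f := Φ) hN0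
    have hI : ∫ x in a l..a (l+1), Φ x
        = (N:ℝ)⁻¹ • ∫ x in ((l:ℝ)*(2*Real.pi))..(((l:ℝ)+1)*(2*Real.pi)), Φ (x / N) := by
      rw [hsub, smul_smul, inv_mul_cancel₀ hN0, one_smul]
      have e1 : a l = (l:ℝ)*(2*Real.pi) / N := by simp only [ha]
      have e2 : a (l+1) = ((l:ℝ)+1) * (2*Real.pi) / N := by
        simp only [ha]; push_cast; ring
      rw [e1, e2]
    have hΦdiv : ∀ x : ℝ, Φ (x/(N:ℝ)) =
        F x * (conj (m₀ (x/N)) * m₀' (x/N) * h₀ (x/N)) := by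
      intro x
      have hx : (N:ℝ) * (x/N) = x := by field_simp
      simp only [hΦ, hx]; ring
    have hshift := integral_comp_add_right (a := (0:ℝ)) (b := 2*Real.pi)
      (f := fun x => F x * (conj (m₀ (x/(N:ℝ))) * m₀' (x/N) * h₀ (x/N))) ((l:ℝ)*(2*Real.pi))
    have e3 : (0:ℝ) + (l:ℝ)*(2*Real.pi) = (l:ℝ)*(2*Real.pi) := by ring
    have e4 : 2*Real.pi + (l:ℝ)*(2*Real.pi) = ((l:ℝ)+1)*(2*Real.pi) := by ring
    rw [e3, e4] at hshift
    rw [hI]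
    simp only [hΦdiv]
    rw [← hshift]
    congr 1
    refine intervalIntegral.integral_congr (fun ω _ => ?_)
    have harg : ω + (l:ℝ)*(2*Real.pi) = ω + 2*Real.pi*(l:ℕ) := by push_cast; ring
    simp only [hterm, harg, hF.periodN l ω]
  have hterm_int : ∀ l : ℕ, IntervalIntegrable (term l) volume 0 (2*Real.pi) := by
    intro l
    have hh₀ab := h₀_intervalIntegrable hh₀1
    have hk : ∀ A B : ℝ, IntervalIntegrable (fun y => h₀ (y * (N:ℝ)⁻¹)) volume A B := by
      intro A B
      have := (hh₀ab (A * (N:ℝ)⁻¹) (B * (N:ℝ)⁻¹)).comp_mul_right (c := (N:ℝ)⁻¹)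
      have eA : A * (N:ℝ)⁻¹ / (N:ℝ)⁻¹ = A := by field_simp
      have eB : B * (N:ℝ)⁻¹ / (N:ℝ)⁻¹ = B := by field_simp
      rwa [eA, eB] at this
    have hk2 : IntervalIntegrable (fun ω => h₀ ((ω + 2*Real.pi*(l:ℝ)) * (N:ℝ)⁻¹))
        volume 0 (2*Real.pi) := by
      have := (hk (0 + 2*Real.pi*(l:ℝ)) (2*Real.pi + 2*Real.pi*(l:ℝ))).comp_add_right
        (2*Real.pi*(l:ℝ))
      have eA : 0 + 2*Real.pi*(l:ℝ) - 2*Real.pi*(l:ℝ) = 0 := by ring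
      have eB : 2*Real.pi + 2*Real.pi*(l:ℝ) - 2*Real.pi*(l:ℝ) = 2*Real.pi := by ring
      rwa [eA, eB] at this
    have hgint : IntegrableOn (fun ω => h₀ ((ω + 2*Real.pi*(l:ℝ)) * (N:ℝ)⁻¹))
        (Set.Ioc 0 (2*Real.pi)) volume := by
      rw [intervalIntegrable_iff, Set.uIoc_of_le hT.le] at hk2; exact hk2
    have hmg : Measurable (fun ω : ℝ => (ω + 2*Real.pi*(l:ℝ)) * (N:ℝ)⁻¹) :=
      (measurable_id.add_const _).mul_const _
    obtain ⟨CF, hCF⟩ := hF.2.1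
    obtain ⟨Cm, hCm⟩ := hm₀.2.1
    obtain ⟨Cm', hCm'⟩ := hm₀'.2.1
    have hCF0 : 0 ≤ CF := le_trans (norm_nonneg _) (hCF 0)
    have hCm0 : 0 ≤ Cm := le_trans (norm_nonneg _) (hCm 0)
    have hbmul : IntegrableOn (fun ω => (F ω * (conj (m₀ ((ω + 2*Real.pi*(l:ℝ)) * (N:ℝ)⁻¹))
        * m₀' ((ω + 2*Real.pi*(l:ℝ)) * (N:ℝ)⁻¹)))
          * h₀ ((ω + 2*Real.pi*(l:ℝ)) * (N:ℝ)⁻¹)) (Set.Ioc 0 (2*Real.pi)) volume := by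
      refine hgint.bdd_mul ?_ (c := CF * (Cm * Cm')) (Filter.Eventually.of_forall fun x => ?_)
      · exact (hF.1.mul ((Complex.continuous_conj.measurable.comp
          (hm₀.1.comp hmg)).mul (hm₀'.1.comp hmg))).aestronglyMeasurable
      · calc ‖F x * (conj (m₀ ((x + 2*Real.pi*(l:ℝ)) * (N:ℝ)⁻¹))
            * m₀' ((x + 2*Real.pi*(l:ℝ)) * (N:ℝ)⁻¹))‖
            = ‖F x‖ * (‖conj (m₀ ((x + 2*Real.pi*(l:ℝ)) * (N:ℝ)⁻¹))‖
              * ‖m₀' ((x + 2*Real.pi*(l:ℝ)) * (N:ℝ)⁻¹)‖) := by rw [norm_mul, norm_mul]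
          _ ≤ CF * (Cm * Cm') := by
              refine mul_le_mul (hCF x) (mul_le_mul ?_ (hCm' _) (norm_nonneg _) hCm0)
                (by positivity) hCF0
              simpa using hCm _
    rw [intervalIntegrable_iff, Set.uIoc_of_le hT.le]
    refine hbmul.congr_fun (fun x _ => ?_) measurableSet_Ioc
    simp only [hterm, div_eq_mul_inv]
    ring
  have hsum : ∑ l ∈ Finset.range N, ((N:ℝ)⁻¹) • ∫ ω in (0:ℝ)..(2*Real.pi), term l ω
      = ((N:ℝ)⁻¹) • ∫ ω in (0:ℝ)..(2*Real.pi), ∑ l ∈ Finset.range N, term l ω := by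
    rw [← Finset.smul_sum]
    congr 1
    exact (intervalIntegral.integral_finset_sum (fun l _ => hterm_int l)).symm
  have hrw : ∀ ω : ℝ, ((N:ℝ)⁻¹) • (∑ l ∈ Finset.range N, term l ω)
      = F ω * ruelle N m₀ m₀' h₀ ω := by
    intro ω
    simp only [hterm, ruelle, ← Finset.mul_sum, Complex.real_smul]
    push_cast
    ring
  calc ∫ x in Set.Ioc (0:ℝ) (2*Real.pi), F ((N:ℝ)*x) * (conj (m₀ x) * m₀' x * h₀ x)
      = ∫ x in (0:ℝ)..(2*Real.pi), Φ x := lhs_eq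
    _ = ∑ l ∈ Finset.range N, ∫ x in a l..a (l+1), Φ x := hsplit.symm
    _ = ((N:ℝ)⁻¹) • ∫ ω in (0:ℝ)..(2*Real.pi), ∑ l ∈ Finset.range N, term l ω := by
        rw [← hsum]; exact Finset.sum_congr rfl (fun l _ => piece l)
    _ = ∫ ω in (0:ℝ)..(2*Real.pi), F ω * ruelle N m₀ m₀' h₀ ω := by
        rw [← intervalIntegral.integral_smul]
        exact intervalIntegral.integral_congr (fun ω _ => hrw ω)
    _ = ∫ x in Set.Ioc (0:ℝ) (2*Real.pi), F x * ruelle N m₀ m₀' h₀ x := by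
        rw [integral_of_le hT.le]
    _ = ∫ x in Set.Ioc (0:ℝ) (2*Real.pi), F x * h₀ x := by
        refine integral_congr_ae ?_
        filter_upwards [ae_restrict_of_ae hh₀eig] with x hx
        rw [hx]

end Per
/-! ### Generator vectors in a cyclic representation -/

section Gen

variable {N : ℕ} {m₀ : ℝ → ℂ} {h : ℝ → ℝ} {H : Type*} [NormedAddCommGroup H]
  [InnerProductSpace ℂ H] [CompleteSpace H]

lemma isFilter_dil1 {N : ℕ} {f : ℝ → ℂ} (hf : IsFilter f) :
    IsFilter (fun x => f ((N:ℝ) * x)) := by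
  obtain ⟨C, hC⟩ := hf.2.1
  refine ⟨hf.1.comp (measurable_const_mul _), ⟨C, fun x => hC _⟩, fun x => ?_⟩
  show f ((N:ℝ) * (x + 2*Real.pi)) = f ((N:ℝ) * x)
  have he : (N:ℝ) * (x + 2*Real.pi) = (N:ℝ)*x + 2*Real.pi*(N:ℕ) := by push_cast; ring
  rw [he, hf.periodN]

/-- The generator vectors `U⁻ⁿ π(f) φ`. -/
def gen (ρ : CyclicRep N m₀ h H) (n : ℕ) (f : ℝ → ℂ) : H :=
  (fun w => ρ.U.symm w)^[n] (ρ.rep f ρ.phi)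

lemma gen_zero_level (ρ : CyclicRep N m₀ h H) (f : ℝ → ℂ) : gen ρ 0 f = ρ.rep f ρ.phi := rfl

lemma gen_succ (ρ : CyclicRep N m₀ h H) (n : ℕ) (f : ℝ → ℂ) :
    gen ρ (n+1) f = ρ.U.symm (gen ρ n f) := by
  unfold gen; rw [Function.iterate_succ_apply']

lemma U_gen (ρ : CyclicRep N m₀ h H) (n : ℕ) (f : ℝ → ℂ) :
    ρ.U (gen ρ (n+1) f) = gen ρ n f := by
  rw [gen_succ]; exact ρ.U.apply_symm_apply _

lemma iter_symm_add (ρ : CyclicRep N m₀ h H) (n : ℕ) (x y : H) :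
    (fun w => ρ.U.symm w)^[n] (x + y)
      = (fun w => ρ.U.symm w)^[n] x + (fun w => ρ.U.symm w)^[n] y := by
  induction n generalizing x y with
  | zero => rfl
  | succ k ih => simp only [Function.iterate_succ_apply, map_add, ih]

lemma iter_symm_smul (ρ : CyclicRep N m₀ h H) (n : ℕ) (c : ℂ) (x : H) :
    (fun w => ρ.U.symm w)^[n] (c • x) = c • (fun w => ρ.U.symm w)^[n] x := by
  induction n generalizing x with
  | zero => rfl
  | succ k ih => simp only [Function.iterate_succ_apply, LinearIsometryEquiv.map_smul, ih]

lemma iter_symm_inner (ρ : CyclicRep N m₀ h H) (n : ℕ) (x y : H) :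
    ⟪(fun w => ρ.U.symm w)^[n] x, (fun w => ρ.U.symm w)^[n] y⟫ = ⟪x, y⟫ := by
  induction n generalizing x y with
  | zero => rfl
  | succ k ih =>
    simp only [Function.iterate_succ_apply]
    rw [ih, LinearIsometryEquiv.inner_map_map]

lemma rep_zero_fun (ρ : CyclicRep N m₀ h H) : ρ.rep 0 = 0 := by
  have := ρ.rep_smul 0 0 isFilter_zero
  rwa [zero_smul, zero_smul] at this

lemma gen_zero (ρ : CyclicRep N m₀ h H) (n : ℕ) : gen ρ n 0 = 0 := by
  unfold gen
  rw [rep_zero_fun]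
  simp only [ContinuousLinearMap.zero_apply]
  induction n with
  | zero => rfl
  | succ k ih => rw [Function.iterate_succ_apply', ih, map_zero]

lemma gen_add (ρ : CyclicRep N m₀ h H) (n : ℕ) {f g : ℝ → ℂ} (hf : IsFilter f)
    (hg : IsFilter g) : gen ρ n (f + g) = gen ρ n f + gen ρ n g := by
  unfold gen
  rw [ρ.rep_add f g hf hg, ContinuousLinearMap.add_apply, iter_symm_add]

lemma gen_smul (ρ : CyclicRep N m₀ h H) (n : ℕ) (c : ℂ) {f : ℝ → ℂ} (hf : IsFilter f) :
    gen ρ n (c • f) = c • gen ρ n f := by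
  unfold gen
  rw [ρ.rep_smul c f hf, ContinuousLinearMap.smul_apply, iter_symm_smul]

lemma inner_rep_left (ρ : CyclicRep N m₀ h H) {f : ℝ → ℂ} (hf : IsFilter f) (x y : H) :
    ⟪ρ.rep f x, y⟫ = ⟪x, ρ.rep (fun t => conj (f t)) y⟫ := by
  rw [ρ.rep_star f hf, ContinuousLinearMap.adjoint_inner_right]

lemma inner_rep_right (ρ : CyclicRep N m₀ h H) {f : ℝ → ℂ} (hf : IsFilter f) (x y : H) :
    ⟪x, ρ.rep f y⟫ = ⟪ρ.rep (fun t => conj (f t)) x, y⟫ := by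
  have h1 : ρ.rep f = ContinuousLinearMap.adjoint (ρ.rep (fun t => conj (f t))) := by
    have := ρ.rep_star (fun t => conj (f t)) hf.conj
    simp only [Complex.conj_conj] at this
    rw [← this]
  rw [h1, ContinuousLinearMap.adjoint_inner_right]

lemma inner_gen (ρ : CyclicRep N m₀ h H) (n : ℕ) {f g : ℝ → ℂ} (hf : IsFilter f)
    (hg : IsFilter g) :
    ⟪gen ρ n f, gen ρ n g⟫ = circleInt fun x => conj (f x) * g x * (h x : ℂ) := by
  unfold gen
  rw [iter_symm_inner]
  rw [inner_rep_left ρ hf]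
  have hmul : ρ.rep (fun t => conj (f t)) (ρ.rep g ρ.phi)
      = ρ.rep ((fun t => conj (f t)) * g) ρ.phi := by
    rw [ρ.rep_mul _ g hf.conj hg]; rfl
  rw [hmul, ρ.moment _ (hf.conj.mul hg)]
  rfl

lemma gen_lift (ρ : CyclicRep N m₀ h H) (hm₀ : IsFilter m₀) (n : ℕ) {f : ℝ → ℂ}
    (hf : IsFilter f) : gen ρ n f = gen ρ (n+1) (Lam N m₀ f) := by
  unfold gen
  rw [Function.iterate_succ_apply]
  congr 1
  have h1 : ρ.rep (Lam N m₀ f) ρ.phi = ρ.U (ρ.rep f ρ.phi) := by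
    rw [ρ.covariant f hf ρ.phi, ρ.scaling]
    have : ρ.rep (fun x => f ((N:ℝ) * x)) (ρ.rep m₀ ρ.phi)
        = ρ.rep ((fun x => f ((N:ℝ) * x)) * m₀) ρ.phi := by
      rw [ρ.rep_mul _ m₀ (isFilter_dil1 hf) hm₀]
      rfl
    rw [this]
    rfl
  rw [h1, ρ.U.symm_apply_apply]

lemma gen_lift_k (ρ : CyclicRep N m₀ h H) (hm₀ : IsFilter m₀) (n k : ℕ) {f : ℝ → ℂ}
    (hf : IsFilter f) : gen ρ n f = gen ρ (n+k) ((Lam N m₀)^[k] f) := by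
  induction k with
  | zero => rfl
  | succ j ih =>
    rw [ih, gen_lift ρ hm₀ (n+j) (isFilter_LamIter hm₀ hf j), Function.iterate_succ_apply']
    rfl

lemma gen_lift_le (ρ : CyclicRep N m₀ h H) (hm₀ : IsFilter m₀) {n k : ℕ} (hnk : n ≤ k)
    {f : ℝ → ℂ} (hf : IsFilter f) : gen ρ n f = gen ρ k ((Lam N m₀)^[k-n] f) := by
  have := gen_lift_k ρ hm₀ n (k-n) hf
  rwa [Nat.add_sub_cancel' hnk] at this

lemma rep_usymm (ρ : CyclicRep N m₀ h H) {g : ℝ → ℂ} (hg : IsFilter g) (x : H) :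
    ρ.rep g (ρ.U.symm x) = ρ.U.symm (ρ.rep (fun t => g ((N:ℝ) * t)) x) := by
  have := ρ.covariant g hg (ρ.U.symm x)
  rw [ρ.U.apply_symm_apply] at this
  rw [← this, ρ.U.symm_apply_apply]

lemma rep_gen (ρ : CyclicRep N m₀ h H) (n : ℕ) {g f : ℝ → ℂ} (hg : IsFilter g)
    (hf : IsFilter f) : ρ.rep g (gen ρ n f) = gen ρ n (dilp N n g * f) := by
  induction n generalizing g with
  | zero =>
    rw [gen_zero_level, gen_zero_level]
    have : ρ.rep g (ρ.rep f ρ.phi) = ρ.rep (g * f) ρ.phi := by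
      rw [ρ.rep_mul g f hg hf]; rfl
    have he : dilp N 0 g * f = g * f := by
      funext x; simp [dilp]
    rw [this, he]
  | succ k ih =>
    rw [gen_succ, gen_succ, rep_usymm ρ hg, ih (isFilter_dil1 hg)]
    congr 2
    funext x
    simp only [Pi.mul_apply, dilp]
    congr 2
    push_cast
    ring

lemma inner_usymm (ρ : CyclicRep N m₀ h H) (a b : H) :
    ⟪ρ.U.symm a, b⟫ = ⟪a, ρ.U b⟫ := by
  have := LinearIsometryEquiv.inner_map_map ρ.U (ρ.U.symm a) b
  rw [ρ.U.apply_symm_apply] at this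
  exact this.symm

lemma norm_gen_sq (ρ : CyclicRep N m₀ h H) (n : ℕ) {f : ℝ → ℂ} (hf : IsFilter f) :
    (‖gen ρ n f‖ : ℝ) ^ 2
      = (2*Real.pi)⁻¹ * ∫ x in Set.Ioc (0:ℝ) (2*Real.pi), ‖f x‖^2 * h x := by
  have h1 : (⟪gen ρ n f, gen ρ n f⟫ : ℂ) = ((‖gen ρ n f‖ : ℂ)) ^ 2 :=
    inner_self_eq_norm_sq_to_K _
  have h2 := inner_gen ρ n hf hf
  have h3 : (circleInt fun x => conj (f x) * f x * (h x : ℂ))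
      = (((2*Real.pi)⁻¹ * ∫ x in Set.Ioc (0:ℝ) (2*Real.pi), ‖f x‖^2 * h x : ℝ) : ℂ) := by
    unfold circleInt
    have h4 : ∀ x : ℝ, conj (f x) * f x * (h x : ℂ) = ((‖f x‖^2 * h x : ℝ) : ℂ) := by
      intro x
      rw [Complex.conj_mul']
      push_cast
      ring
    simp only [h4]
    have h5 : ∫ x in Set.Ioc (0:ℝ) (2*Real.pi), ((‖f x‖^2 * h x : ℝ) : ℂ)
        = ((∫ x in Set.Ioc (0:ℝ) (2*Real.pi), ‖f x‖^2 * h x : ℝ) : ℂ) := integral_ofReal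
    rw [h5]
    push_cast
    ring
  rw [h2, h3] at h1
  have h6 : ((((2*Real.pi)⁻¹ * ∫ x in Set.Ioc (0:ℝ) (2*Real.pi), ‖f x‖^2 * h x) : ℝ) : ℂ)
      = ((‖gen ρ n f‖^2 : ℝ) : ℂ) := by exact_mod_cast h1
  exact (Complex.ofReal_inj.mp h6).symm

end Gen
/-! ### The pairing `Bval` and its properties -/

section BvalSec

def Bval (h₀ : ℝ → ℂ) (f g : ℝ → ℂ) : ℂ := circleInt fun x => conj (f x) * g x * h₀ x

def Bfun (N : ℕ) (m₀ m₀' h₀ : ℝ → ℂ) (m : ℕ) (f : ℝ → ℂ) (n : ℕ) (g : ℝ → ℂ) : ℂ :=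
  Bval h₀ ((Lam N m₀)^[max m n - m] f) ((Lam N m₀')^[max m n - n] g)

variable {N : ℕ} {m₀ m₀' h₀ : ℝ → ℂ}

lemma Bval_step (hN : 1 ≤ N) (hm₀ : IsFilter m₀) (hm₀' : IsFilter m₀') (hh₀1 : MemL1T h₀)
    (hh₀eig : ∀ᵐ ω ∂(volume : Measure ℝ), ruelle N m₀ m₀' h₀ ω = h₀ ω)
    {f g : ℝ → ℂ} (hf : IsFilter f) (hg : IsFilter g) :
    Bval h₀ (Lam N m₀ f) (Lam N m₀' g) = Bval h₀ f g := by
  unfold Bval circleInt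
  congr 1
  have hFf : IsFilter (fun x => conj (f x) * g x) := hf.conj.mul hg
  calc ∫ x in Set.Ioc (0:ℝ) (2*Real.pi), conj ((Lam N m₀ f) x) * (Lam N m₀' g) x * h₀ x
      = ∫ x in Set.Ioc (0:ℝ) (2*Real.pi),
          (fun t => conj (f t) * g t) ((N:ℝ)*x) * (conj (m₀ x) * m₀' x * h₀ x) := by
        refine setIntegral_congr_fun measurableSet_Ioc (fun x _ => ?_)
        simp only [Lam, map_mul]
        ring
    _ = ∫ x in Set.Ioc (0:ℝ) (2*Real.pi), (fun t => conj (f t) * g t) x * h₀ x :=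
        per hN hm₀ hm₀' hh₀1 hh₀eig hFf
    _ = ∫ x in Set.Ioc (0:ℝ) (2*Real.pi), conj (f x) * g x * h₀ x := rfl

lemma Bval_iter (hN : 1 ≤ N) (hm₀ : IsFilter m₀) (hm₀' : IsFilter m₀') (hh₀1 : MemL1T h₀)
    (hh₀eig : ∀ᵐ ω ∂(volume : Measure ℝ), ruelle N m₀ m₀' h₀ ω = h₀ ω)
    (j : ℕ) {f g : ℝ → ℂ} (hf : IsFilter f) (hg : IsFilter g) :
    Bval h₀ ((Lam N m₀)^[j] f) ((Lam N m₀')^[j] g) = Bval h₀ f g := by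
  induction j with
  | zero => rfl
  | succ k ih =>
    rw [Function.iterate_succ_apply', Function.iterate_succ_apply',
      Bval_step hN hm₀ hm₀' hh₀1 hh₀eig (isFilter_LamIter hm₀ hf k)
        (isFilter_LamIter hm₀' hg k), ih]

lemma Bfun_eq (hN : 1 ≤ N) (hm₀ : IsFilter m₀) (hm₀' : IsFilter m₀') (hh₀1 : MemL1T h₀)
    (hh₀eig : ∀ᵐ ω ∂(volume : Measure ℝ), ruelle N m₀ m₀' h₀ ω = h₀ ω)
    {m n k : ℕ} (hm : m ≤ k) (hn : n ≤ k) {f g : ℝ → ℂ} (hf : IsFilter f) (hg : IsFilter g) :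
    Bfun N m₀ m₀' h₀ m f n g
      = Bval h₀ ((Lam N m₀)^[k-m] f) ((Lam N m₀')^[k-n] g) := by
  unfold Bfun
  have e1 : k - m = (k - max m n) + (max m n - m) := by omega
  have e2 : k - n = (k - max m n) + (max m n - n) := by omega
  rw [e1, e2, Function.iterate_add_apply, Function.iterate_add_apply,
    Bval_iter hN hm₀ hm₀' hh₀1 hh₀eig (k - max m n)
      (isFilter_LamIter hm₀ hf (max m n - m)) (isFilter_LamIter hm₀' hg (max m n - n))]

lemma Bval_integrableOn (hh₀1 : MemL1T h₀) {f g : ℝ → ℂ} (hf : IsFilter f) (hg : IsFilter g) :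
    IntegrableOn (fun x => conj (f x) * g x * h₀ x) (Set.Ioc (0:ℝ) (2*Real.pi)) volume := by
  have := filter_mul_intervalIntegrable hh₀1 (hf.conj.mul hg) 0 (2*Real.pi)
  rw [intervalIntegrable_iff, Set.uIoc_of_le (by positivity : (0:ℝ) ≤ 2*Real.pi)] at this
  exact this

lemma Bval_add_left (hh₀1 : MemL1T h₀) {f f' g : ℝ → ℂ} (hf : IsFilter f) (hf' : IsFilter f')
    (hg : IsFilter g) : Bval h₀ (f + f') g = Bval h₀ f g + Bval h₀ f' g := by
  unfold Bval circleInt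
  rw [← mul_add, ← integral_add (Bval_integrableOn hh₀1 hf hg) (Bval_integrableOn hh₀1 hf' hg)]
  congr 1
  refine setIntegral_congr_fun measurableSet_Ioc (fun x _ => ?_)
  simp only [Pi.add_apply, map_add]
  ring

lemma Bval_add_right (hh₀1 : MemL1T h₀) {f g g' : ℝ → ℂ} (hf : IsFilter f) (hg : IsFilter g)
    (hg' : IsFilter g') : Bval h₀ f (g + g') = Bval h₀ f g + Bval h₀ f g' := by
  unfold Bval circleInt
  rw [← mul_add, ← integral_add (Bval_integrableOn hh₀1 hf hg) (Bval_integrableOn hh₀1 hf hg')]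
  congr 1
  refine setIntegral_congr_fun measurableSet_Ioc (fun x _ => ?_)
  simp only [Pi.add_apply]
  ring

lemma Bval_smul_left (c : ℂ) (f g : ℝ → ℂ) :
    Bval h₀ (c • f) g = conj c * Bval h₀ f g := by
  unfold Bval circleInt
  have he : ∀ x : ℝ, conj ((c • f) x) * g x * h₀ x = conj c * (conj (f x) * g x * h₀ x) := by
    intro x
    simp only [Pi.smul_apply, smul_eq_mul, map_mul]
    ring
  simp only [he]
  rw [integral_const_mul]
  ring

lemma Bval_smul_right (c : ℂ) (f g : ℝ → ℂ) :
    Bval h₀ f (c • g) = c * Bval h₀ f g := by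
  unfold Bval circleInt
  have he : ∀ x : ℝ, conj (f x) * (c • g) x * h₀ x = c * (conj (f x) * g x * h₀ x) := by
    intro x
    simp only [Pi.smul_apply, smul_eq_mul]
    ring
  simp only [he]
  rw [integral_const_mul]
  ring

lemma Bval_cs {c : ℝ} (hc : 0 ≤ c) {h h' : ℝ → ℝ}
    (hh1 : MemL1T fun x => (h x : ℂ)) (hhpos : ∀ x, 0 ≤ h x)
    (hh'1 : MemL1T fun x => (h' x : ℂ)) (hh'pos : ∀ x, 0 ≤ h' x)
    (hh₀1 : MemL1T h₀)
    (hbound : ∀ᵐ x ∂(volume : Measure ℝ), ‖h₀ x‖ ^ 2 ≤ c * h x * h' x)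
    {f g : ℝ → ℂ} (hf : IsFilter f) (hg : IsFilter g) :
    ‖Bval h₀ f g‖ ≤ Real.sqrt c
      * Real.sqrt ((2*Real.pi)⁻¹ * ∫ x in Set.Ioc (0:ℝ) (2*Real.pi), ‖f x‖^2 * h x)
      * Real.sqrt ((2*Real.pi)⁻¹ * ∫ x in Set.Ioc (0:ℝ) (2*Real.pi), ‖g x‖^2 * h' x) := by
  have ht0 : (0:ℝ) ≤ (2*Real.pi)⁻¹ := by positivity
  set μ := volume.restrict (Set.Ioc (0:ℝ) (2*Real.pi)) with hμ
  -- real-valued integrable versions of h, h'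
  have hhI : Integrable h μ := by
    have := hh1.1.re
    simpa using this
  have hh'I : Integrable h' μ := by
    have := hh'1.1.re
    simpa using this
  have hhsm : AEStronglyMeasurable h μ := hhI.aestronglyMeasurable
  have hh'sm : AEStronglyMeasurable h' μ := hh'I.aestronglyMeasurable
  set u : ℝ → ℝ := fun x => ‖f x‖ * Real.sqrt (h x) with hu
  set v : ℝ → ℝ := fun x => ‖g x‖ * Real.sqrt (h' x) with hv
  have hu_sq : (fun x => u x ^ 2) = fun x => ‖f x‖^2 * h x := by
    funext x
    rw [hu, mul_pow, Real.sq_sqrt (hhpos x)]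
  have hv_sq : (fun x => v x ^ 2) = fun x => ‖g x‖^2 * h' x := by
    funext x
    rw [hv, mul_pow, Real.sq_sqrt (hh'pos x)]
  obtain ⟨Cf, hCf⟩ := hf.2.1
  obtain ⟨Cg, hCg⟩ := hg.2.1
  have hfsq_int : Integrable (fun x => ‖f x‖^2 * h x) μ := by
    refine hhI.bdd_mul ((hf.1.norm.pow_const 2).aestronglyMeasurable) (c := Cf^2) (Filter.Eventually.of_forall fun x => ?_)
    rw [Real.norm_eq_abs, _root_.abs_of_nonneg (by positivity : (0:ℝ) ≤ ‖f x‖^2)]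
    exact pow_le_pow_left₀ (norm_nonneg _) (hCf x) 2
  have hgsq_int : Integrable (fun x => ‖g x‖^2 * h' x) μ := by
    refine hh'I.bdd_mul ((hg.1.norm.pow_const 2).aestronglyMeasurable) (c := Cg^2) (Filter.Eventually.of_forall fun x => ?_)
    rw [Real.norm_eq_abs, _root_.abs_of_nonneg (by positivity : (0:ℝ) ≤ ‖g x‖^2)]
    exact pow_le_pow_left₀ (norm_nonneg _) (hCg x) 2
  have hu2 : Integrable (fun x => u x ^ 2) μ := by rw [hu_sq]; exact hfsq_int
  have hv2 : Integrable (fun x => v x ^ 2) μ := by rw [hv_sq]; exact hgsq_int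
  have husm : AEStronglyMeasurable u μ :=
    (hf.1.norm.aestronglyMeasurable).mul
      (Real.continuous_sqrt.comp_aestronglyMeasurable hhsm)
  have hvsm : AEStronglyMeasurable v μ :=
    (hg.1.norm.aestronglyMeasurable).mul
      (Real.continuous_sqrt.comp_aestronglyMeasurable hh'sm)
  have huv_int : Integrable (fun x => u x * v x) μ := by
    refine Integrable.mono' (((hu2.add hv2).div_const 2)) (husm.mul hvsm)
      (Filter.Eventually.of_forall fun x => ?_)
    have hu0 : 0 ≤ u x := by rw [hu]; positivity
    have hv0 : 0 ≤ v x := by rw [hv]; positivity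
    simp only [Pi.add_apply]
    rw [Real.norm_eq_abs, _root_.abs_of_nonneg (mul_nonneg hu0 hv0)]
    have := two_mul_le_add_sq (u x) (v x)
    linarith
  have hbre : ∀ᵐ x ∂μ, ‖h₀ x‖ ^ 2 ≤ c * h x * h' x := ae_restrict_of_ae hbound
  have step2 : ∫ x, ‖conj (f x) * g x * h₀ x‖ ∂μ
      ≤ ∫ x, Real.sqrt c * (u x * v x) ∂μ := by
    refine integral_mono_ae (Bval_integrableOn hh₀1 hf hg).norm (huv_int.const_mul _) ?_
    filter_upwards [hbre] with x hx
    have h₀b : ‖h₀ x‖ ≤ Real.sqrt c * Real.sqrt (h x) * Real.sqrt (h' x) := by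
      have h1 : ‖h₀ x‖ = Real.sqrt (‖h₀ x‖^2) := (Real.sqrt_sq (norm_nonneg _)).symm
      rw [h1]
      calc Real.sqrt (‖h₀ x‖^2) ≤ Real.sqrt (c * h x * h' x) := Real.sqrt_le_sqrt hx
        _ = Real.sqrt c * Real.sqrt (h x) * Real.sqrt (h' x) := by
            rw [Real.sqrt_mul (mul_nonneg hc (hhpos x)), Real.sqrt_mul hc]
    calc ‖conj (f x) * g x * h₀ x‖ = ‖f x‖ * ‖g x‖ * ‖h₀ x‖ := by
          rw [norm_mul, norm_mul, RCLike.norm_conj]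
      _ ≤ ‖f x‖ * ‖g x‖ * (Real.sqrt c * Real.sqrt (h x) * Real.sqrt (h' x)) := by
          gcongr <;> first
            | exact h₀b
            | exact mul_nonneg (norm_nonneg _) (norm_nonneg _)
      _ = Real.sqrt c * (u x * v x) := by rw [hu, hv]; ring
  have step4 : ∫ x, u x * v x ∂μ
      ≤ Real.sqrt (∫ x, u x ^2 ∂μ) * Real.sqrt (∫ x, v x ^2 ∂μ) :=
    integral_cauchy_schwarz μ husm hvsm
      (Filter.Eventually.of_forall fun x => by rw [hu]; positivity)
      (Filter.Eventually.of_forall fun x => by rw [hv]; positivity) hu2 hv2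
  have hAB : ∫ x, u x ^2 ∂μ = ∫ x in Set.Ioc (0:ℝ) (2*Real.pi), ‖f x‖^2 * h x := by
    rw [hu_sq]
  have hAB' : ∫ x, v x ^2 ∂μ = ∫ x in Set.Ioc (0:ℝ) (2*Real.pi), ‖g x‖^2 * h' x := by
    rw [hv_sq]
  set A := ∫ x in Set.Ioc (0:ℝ) (2*Real.pi), ‖f x‖^2 * h x with hA
  set B := ∫ x in Set.Ioc (0:ℝ) (2*Real.pi), ‖g x‖^2 * h' x with hB
  have step0 : ‖Bval h₀ f g‖ = (2*Real.pi)⁻¹ * ‖∫ x, conj (f x) * g x * h₀ x ∂μ‖ := by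
    unfold Bval circleInt
    rw [norm_mul]
    congr 1
    rw [Complex.norm_real, Real.norm_eq_abs, _root_.abs_of_nonneg ht0]
  calc ‖Bval h₀ f g‖ = (2*Real.pi)⁻¹ * ‖∫ x, conj (f x) * g x * h₀ x ∂μ‖ := step0
    _ ≤ (2*Real.pi)⁻¹ * ∫ x, ‖conj (f x) * g x * h₀ x‖ ∂μ := by
        gcongr
        exact norm_integral_le_integral_norm _
    _ ≤ (2*Real.pi)⁻¹ * ∫ x, Real.sqrt c * (u x * v x) ∂μ := by gcongr
    _ = (2*Real.pi)⁻¹ * (Real.sqrt c * ∫ x, u x * v x ∂μ) := by rw [integral_const_mul]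
    _ ≤ (2*Real.pi)⁻¹ * (Real.sqrt c * (Real.sqrt A * Real.sqrt B)) := by
        rw [← hAB, ← hAB']
        gcongr
    _ = Real.sqrt c * Real.sqrt ((2*Real.pi)⁻¹ * A) * Real.sqrt ((2*Real.pi)⁻¹ * B) := by
        have hss : Real.sqrt ((2*Real.pi)⁻¹) * Real.sqrt ((2*Real.pi)⁻¹) = (2*Real.pi)⁻¹ :=
          Real.mul_self_sqrt ht0
        rw [Real.sqrt_mul ht0 A, Real.sqrt_mul ht0 B]
        linear_combination (-(Real.sqrt c * Real.sqrt A * Real.sqrt B)) * hss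

end BvalSec

/-! ### The submodule of generator vectors -/

section GenSub

variable {N : ℕ} {m₀ : ℝ → ℂ} {h : ℝ → ℝ} {H : Type*} [NormedAddCommGroup H]
  [InnerProductSpace ℂ H] [CompleteSpace H]

def genSub (ρ : CyclicRep N m₀ h H) (hm₀ : IsFilter m₀) : Submodule ℂ H where
  carrier := {v : H | ∃ n f, IsFilter f ∧ v = gen ρ n f}
  zero_mem' := ⟨0, 0, isFilter_zero, (gen_zero ρ 0).symm⟩
  add_mem' := by
    rintro x y ⟨n, f, hf, rfl⟩ ⟨m, g, hg, rfl⟩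
    refine ⟨max n m, (Lam N m₀)^[max n m - n] f + (Lam N m₀)^[max n m - m] g,
      (isFilter_LamIter hm₀ hf _).add (isFilter_LamIter hm₀ hg _), ?_⟩
    rw [gen_add _ _ (isFilter_LamIter hm₀ hf _) (isFilter_LamIter hm₀ hg _),
      ← gen_lift_le ρ hm₀ (le_max_left n m) hf, ← gen_lift_le ρ hm₀ (le_max_right n m) hg]
  smul_mem' := by
    rintro a x ⟨n, f, hf, rfl⟩
    exact ⟨n, a • f, hf.smul a, (gen_smul ρ n a hf).symm⟩

lemma mem_genSub {ρ : CyclicRep N m₀ h H} {hm₀ : IsFilter m₀} {x : H} :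
    x ∈ genSub ρ hm₀ ↔ ∃ n f, IsFilter f ∧ x = gen ρ n f := Iff.rfl

lemma dense_genSub (ρ : CyclicRep N m₀ h H) (hm₀ : IsFilter m₀) :
    Dense ((genSub ρ hm₀ : Submodule ℂ H) : Set H) := by
  have hc := ρ.cyclic
  have he : {v : H | ∃ (n : ℕ) (f : ℝ → ℂ), IsFilter f ∧
      v = (fun w => ρ.U.symm w)^[n] (ρ.rep f ρ.phi)} = ((genSub ρ hm₀ : Submodule ℂ H) : Set H) :=
    rfl
  rw [he, Submodule.span_eq] at hc
  exact hc

end GenSub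
/-! ### Further `Bfun` identities -/

section BfunMore

variable {N : ℕ} {m₀ m₀' h₀ : ℝ → ℂ}

lemma dilp_dilp (N a b : ℕ) (q : ℝ → ℂ) : dilp N a (dilp N b q) = dilp N (b+a) q := by
  funext x
  simp only [dilp]
  congr 1
  rw [pow_add]
  ring

lemma Bval_move (k : ℕ) (p F G : ℝ → ℂ) :
    Bval h₀ (dilp N k (fun x => conj (p x)) * F) G = Bval h₀ F (dilp N k p * G) := by
  unfold Bval
  congr 1
  funext x
  simp only [Pi.mul_apply, dilp, map_mul, Complex.conj_conj]
  ring

lemma Bfun_zero_zero (f g : ℝ → ℂ) : Bfun N m₀ m₀' h₀ 0 f 0 g = Bval h₀ f g := rfl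

lemma Bfun_succ_succ (hN : 1 ≤ N) (hm₀ : IsFilter m₀) (hm₀' : IsFilter m₀') (hh₀1 : MemL1T h₀)
    (hh₀eig : ∀ᵐ ω ∂(volume : Measure ℝ), ruelle N m₀ m₀' h₀ ω = h₀ ω)
    {m n : ℕ} {f g : ℝ → ℂ} (hf : IsFilter f) (hg : IsFilter g) :
    Bfun N m₀ m₀' h₀ (m+1) f (n+1) g = Bfun N m₀ m₀' h₀ m f n g := by
  rw [Bfun_eq hN hm₀ hm₀' hh₀1 hh₀eig (Nat.succ_le_succ (le_max_left m n))
      (Nat.succ_le_succ (le_max_right m n)) hf hg,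
    Bfun_eq hN hm₀ hm₀' hh₀1 hh₀eig (le_max_left m n) (le_max_right m n) hf hg,
    show max m n + 1 - (m+1) = max m n - m from by omega,
    show max m n + 1 - (n+1) = max m n - n from by omega]

lemma Bfun_lift_right (hN : 1 ≤ N) (hm₀ : IsFilter m₀) (hm₀' : IsFilter m₀') (hh₀1 : MemL1T h₀)
    (hh₀eig : ∀ᵐ ω ∂(volume : Measure ℝ), ruelle N m₀ m₀' h₀ ω = h₀ ω)
    {m n : ℕ} {f g : ℝ → ℂ} (hf : IsFilter f) (hg : IsFilter g) :
    Bfun N m₀ m₀' h₀ m f n g = Bfun N m₀ m₀' h₀ m f (n+1) (Lam N m₀' g) := by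
  rw [Bfun_eq hN hm₀ hm₀' hh₀1 hh₀eig (le_max_left m (n+1))
      (le_trans (Nat.le_succ n) (le_max_right m (n+1))) hf hg,
    Bfun_eq hN hm₀ hm₀' hh₀1 hh₀eig (le_max_left m (n+1)) (le_max_right m (n+1)) hf
      (isFilter_Lam hm₀' hg)]
  congr 1
  rw [← Function.iterate_succ_apply,
    show (max m (n+1) - (n+1)).succ = max m (n+1) - n from by omega]

lemma Bfun_lift_left (hN : 1 ≤ N) (hm₀ : IsFilter m₀) (hm₀' : IsFilter m₀') (hh₀1 : MemL1T h₀)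
    (hh₀eig : ∀ᵐ ω ∂(volume : Measure ℝ), ruelle N m₀ m₀' h₀ ω = h₀ ω)
    {m n : ℕ} {f g : ℝ → ℂ} (hf : IsFilter f) (hg : IsFilter g) :
    Bfun N m₀ m₀' h₀ m f n g = Bfun N m₀ m₀' h₀ (m+1) (Lam N m₀ f) n g := by
  rw [Bfun_eq hN hm₀ hm₀' hh₀1 hh₀eig (le_trans (Nat.le_succ m) (le_max_left (m+1) n))
      (le_max_right (m+1) n) hf hg,
    Bfun_eq hN hm₀ hm₀' hh₀1 hh₀eig (le_max_left (m+1) n) (le_max_right (m+1) n)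
      (isFilter_Lam hm₀ hf) hg]
  have he : (Lam N m₀)^[max (m+1) n - m] f
      = (Lam N m₀)^[max (m+1) n - (m+1)] (Lam N m₀ f) := by
    rw [← Function.iterate_succ_apply,
      show (max (m+1) n - (m+1)).succ = max (m+1) n - m from by omega]
  rw [he]

lemma Bfun_smul_right (hN : 1 ≤ N) (hm₀ : IsFilter m₀) (hm₀' : IsFilter m₀') (hh₀1 : MemL1T h₀)
    (hh₀eig : ∀ᵐ ω ∂(volume : Measure ℝ), ruelle N m₀ m₀' h₀ ω = h₀ ω)
    {m n : ℕ} (a : ℂ) {f g : ℝ → ℂ} (hf : IsFilter f) (hg : IsFilter g) :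
    Bfun N m₀ m₀' h₀ m f n (a • g) = a * Bfun N m₀ m₀' h₀ m f n g := by
  rw [Bfun_eq hN hm₀ hm₀' hh₀1 hh₀eig (le_max_left m n) (le_max_right m n) hf (hg.smul a),
    Bfun_eq hN hm₀ hm₀' hh₀1 hh₀eig (le_max_left m n) (le_max_right m n) hf hg,
    LamIter_smul, Bval_smul_right]

lemma Bfun_smul_left (hN : 1 ≤ N) (hm₀ : IsFilter m₀) (hm₀' : IsFilter m₀') (hh₀1 : MemL1T h₀)
    (hh₀eig : ∀ᵐ ω ∂(volume : Measure ℝ), ruelle N m₀ m₀' h₀ ω = h₀ ω)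
    {m n : ℕ} (a : ℂ) {f g : ℝ → ℂ} (hf : IsFilter f) (hg : IsFilter g) :
    Bfun N m₀ m₀' h₀ m (a • f) n g = conj a * Bfun N m₀ m₀' h₀ m f n g := by
  rw [Bfun_eq hN hm₀ hm₀' hh₀1 hh₀eig (le_max_left m n) (le_max_right m n) (hf.smul a) hg,
    Bfun_eq hN hm₀ hm₀' hh₀1 hh₀eig (le_max_left m n) (le_max_right m n) hf hg,
    LamIter_smul, Bval_smul_left]

lemma Bfun_add_right (hN : 1 ≤ N) (hm₀ : IsFilter m₀) (hm₀' : IsFilter m₀') (hh₀1 : MemL1T h₀)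
    (hh₀eig : ∀ᵐ ω ∂(volume : Measure ℝ), ruelle N m₀ m₀' h₀ ω = h₀ ω)
    {m K n1 n2 : ℕ} {f g1 g2 : ℝ → ℂ} (hf : IsFilter f) (hg1 : IsFilter g1)
    (hg2 : IsFilter g2) (h1 : n1 ≤ K) (h2 : n2 ≤ K) :
    Bfun N m₀ m₀' h₀ m f K ((Lam N m₀')^[K-n1] g1 + (Lam N m₀')^[K-n2] g2)
      = Bfun N m₀ m₀' h₀ m f n1 g1 + Bfun N m₀ m₀' h₀ m f n2 g2 := by
  rw [Bfun_eq hN hm₀ hm₀' hh₀1 hh₀eig (le_max_left m K) (le_max_right m K) hf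
      ((isFilter_LamIter hm₀' hg1 _).add (isFilter_LamIter hm₀' hg2 _)),
    Bfun_eq hN hm₀ hm₀' hh₀1 hh₀eig (le_max_left m K) (le_trans h1 (le_max_right m K)) hf hg1,
    Bfun_eq hN hm₀ hm₀' hh₀1 hh₀eig (le_max_left m K) (le_trans h2 (le_max_right m K)) hf hg2,
    LamIter_add,
    Bval_add_right hh₀1 (isFilter_LamIter hm₀ hf _)
      (isFilter_LamIter hm₀' (isFilter_LamIter hm₀' hg1 _) _)
      (isFilter_LamIter hm₀' (isFilter_LamIter hm₀' hg2 _) _),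
    ← Function.iterate_add_apply, ← Function.iterate_add_apply,
    show max m K - K + (K - n1) = max m K - n1 from by omega,
    show max m K - K + (K - n2) = max m K - n2 from by omega]

lemma Bfun_add_left (hN : 1 ≤ N) (hm₀ : IsFilter m₀) (hm₀' : IsFilter m₀') (hh₀1 : MemL1T h₀)
    (hh₀eig : ∀ᵐ ω ∂(volume : Measure ℝ), ruelle N m₀ m₀' h₀ ω = h₀ ω)
    {K m1 m2 n : ℕ} {f1 f2 g : ℝ → ℂ} (hf1 : IsFilter f1) (hf2 : IsFilter f2)
    (hg : IsFilter g) (h1 : m1 ≤ K) (h2 : m2 ≤ K) :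
    Bfun N m₀ m₀' h₀ K ((Lam N m₀)^[K-m1] f1 + (Lam N m₀)^[K-m2] f2) n g
      = Bfun N m₀ m₀' h₀ m1 f1 n g + Bfun N m₀ m₀' h₀ m2 f2 n g := by
  rw [Bfun_eq hN hm₀ hm₀' hh₀1 hh₀eig (le_max_left K n) (le_max_right K n)
      ((isFilter_LamIter hm₀ hf1 _).add (isFilter_LamIter hm₀ hf2 _)) hg,
    Bfun_eq hN hm₀ hm₀' hh₀1 hh₀eig (le_trans h1 (le_max_left K n)) (le_max_right K n) hf1 hg,
    Bfun_eq hN hm₀ hm₀' hh₀1 hh₀eig (le_trans h2 (le_max_left K n)) (le_max_right K n) hf2 hg,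
    LamIter_add,
    Bval_add_left hh₀1 (isFilter_LamIter hm₀ (isFilter_LamIter hm₀ hf1 _) _)
      (isFilter_LamIter hm₀ (isFilter_LamIter hm₀ hf2 _) _)
      (isFilter_LamIter hm₀' hg _),
    ← Function.iterate_add_apply, ← Function.iterate_add_apply,
    show max K n - K + (K - m1) = max K n - m1 from by omega,
    show max K n - K + (K - m2) = max K n - m2 from by omega]

lemma Bfun_move (hN : 1 ≤ N) (hm₀ : IsFilter m₀) (hm₀' : IsFilter m₀') (hh₀1 : MemL1T h₀)
    (hh₀eig : ∀ᵐ ω ∂(volume : Measure ℝ), ruelle N m₀ m₀' h₀ ω = h₀ ω)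
    {m n : ℕ} {p f g : ℝ → ℂ} (hp : IsFilter p) (hf : IsFilter f) (hg : IsFilter g) :
    Bfun N m₀ m₀' h₀ m (dilp N m (fun x => conj (p x)) * f) n g
      = Bfun N m₀ m₀' h₀ m f n (dilp N n p * g) := by
  rw [Bfun_eq hN hm₀ hm₀' hh₀1 hh₀eig (le_max_left m n) (le_max_right m n)
      ((isFilter_dilp hp.conj).mul hf) hg,
    Bfun_eq hN hm₀ hm₀' hh₀1 hh₀eig (le_max_left m n) (le_max_right m n) hf
      ((isFilter_dilp hp).mul hg),
    LamIter_mul_dilp, LamIter_mul_dilp, dilp_dilp, dilp_dilp,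
    show m + (max m n - m) = max m n from by omega,
    show n + (max m n - n) = max m n from by omega]
  exact Bval_move (max m n) p _ _

end BfunMore

section GenMore

variable {N : ℕ} {m₀ : ℝ → ℂ} {h : ℝ → ℝ} {H : Type*} [NormedAddCommGroup H]
  [InnerProductSpace ℂ H] [CompleteSpace H]

lemma U_gen_zero (ρ : CyclicRep N m₀ h H) (hm₀ : IsFilter m₀) {f : ℝ → ℂ} (hf : IsFilter f) :
    ρ.U (gen ρ 0 f) = gen ρ 0 (Lam N m₀ f) := by
  rw [gen_lift ρ hm₀ 0 hf]
  exact U_gen ρ 0 (Lam N m₀ f)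

lemma gen_one (ρ : CyclicRep N m₀ h H) : gen ρ 0 1 = ρ.phi := by
  rw [gen_zero_level, ρ.rep_one, ContinuousLinearMap.one_apply]

end GenMore

/- STATEMENT 4 (Theorem `th1` of the paper): a solution `h₀` of `R_{m₀,m₀'}h₀ = h₀` with
`|h₀|² ≤ c h h'` induces a unique intertwining operator `S : H' → H` between the cyclic
representations associated to `h` and `h'`, with `‖S‖ ≤ √c`. -/
theorem stmt_4 {H H' : Type*}
    [NormedAddCommGroup H] [InnerProductSpace ℂ H] [CompleteSpace H]
    [NormedAddCommGroup H'] [InnerProductSpace ℂ H'] [CompleteSpace H']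
    (N : ℕ) (hN : 2 ≤ N) (m₀ m₀' : ℝ → ℂ)
    (hm₀ : IsFilter m₀) (hm₀' : IsFilter m₀')
    (hns : NonSingular m₀) (hns' : NonSingular m₀')
    (h h' : ℝ → ℝ)
    -- h, h' ∈ L¹(𝕋), h, h' ≥ 0
    (hh1 : MemL1T fun x => (h x : ℂ)) (hhpos : ∀ x, 0 ≤ h x)
    (hh'1 : MemL1T fun x => (h' x : ℂ)) (hh'pos : ∀ x, 0 ≤ h' x)
    -- R_{m₀,m₀}h = h and R_{m₀',m₀'}h' = h'
    (hheig : ∀ᵐ ω ∂(volume : Measure ℝ), ruelle N m₀ m₀ (fun x => (h x : ℂ)) ω = (h ω : ℂ))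
    (hh'eig : ∀ᵐ ω ∂(volume : Measure ℝ), ruelle N m₀' m₀' (fun x => (h' x : ℂ)) ω = (h' ω : ℂ))
    -- the cyclic representations associated to h and h'
    (ρ : CyclicRep N m₀ h H) (ρ' : CyclicRep N m₀' h' H')
    -- h₀ ∈ L¹(𝕋) with R_{m₀,m₀'}h₀ = h₀ and |h₀|² ≤ c h h'
    (h₀ : ℝ → ℂ) (hh₀1 : MemL1T h₀)
    (hh₀eig : ∀ᵐ ω ∂(volume : Measure ℝ), ruelle N m₀ m₀' h₀ ω = h₀ ω)
    (c : ℝ) (hc : 0 < c)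
    (hbound : ∀ᵐ x ∂(volume : Measure ℝ), ‖h₀ x‖ ^ 2 ≤ c * h x * h' x) :
    ∃ S : H' →L[ℂ] H,
      ((∀ v, S (ρ'.U v) = ρ.U (S v)) ∧
        (∀ f, IsFilter f → S.comp (ρ'.rep f) = (ρ.rep f).comp S) ∧
        (∀ f, IsFilter f → ⟪ρ.phi, ρ.rep f (S ρ'.phi)⟫ = circleInt fun x => f x * h₀ x)) ∧
      ‖S‖ ≤ Real.sqrt c ∧
      ∀ S' : H' →L[ℂ] H,
        ((∀ v, S' (ρ'.U v) = ρ.U (S' v)) ∧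
          (∀ f, IsFilter f → S'.comp (ρ'.rep f) = (ρ.rep f).comp S') ∧
          (∀ f, IsFilter f → ⟪ρ.phi, ρ.rep f (S' ρ'.phi)⟫ = circleInt fun x => f x * h₀ x)) →
        S' = S := by
  classical
  have hN1 : 1 ≤ N := le_trans one_le_two hN
  have hc0 : (0:ℝ) ≤ c := hc.le
  have hsc0 : (0:ℝ) ≤ Real.sqrt c := Real.sqrt_nonneg c
  have hdH : Dense ((genSub ρ hm₀ : Submodule ℂ H) : Set H) := dense_genSub ρ hm₀
  have hdH' : Dense ((genSub ρ' hm₀' : Submodule ℂ H') : Set H') := dense_genSub ρ' hm₀'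
  -- Cauchy–Schwarz in vector form
  have norm_gen_eq : ∀ (n : ℕ) (f : ℝ → ℂ), IsFilter f →
      ‖gen ρ n f‖
        = Real.sqrt ((2*Real.pi)⁻¹ * ∫ x in Set.Ioc (0:ℝ) (2*Real.pi), ‖f x‖^2 * h x) := by
    intro n f hf
    rw [← norm_gen_sq ρ n hf, Real.sqrt_sq (norm_nonneg _)]
  have norm_gen_eq' : ∀ (n : ℕ) (g : ℝ → ℂ), IsFilter g →
      ‖gen ρ' n g‖
        = Real.sqrt ((2*Real.pi)⁻¹ * ∫ x in Set.Ioc (0:ℝ) (2*Real.pi), ‖g x‖^2 * h' x) := by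
    intro n g hg
    rw [← norm_gen_sq ρ' n hg, Real.sqrt_sq (norm_nonneg _)]
  have key_cs : ∀ {f g : ℝ → ℂ}, IsFilter f → IsFilter g → ∀ (mz nz : ℕ),
      ‖Bval h₀ f g‖ ≤ Real.sqrt c * ‖gen ρ mz f‖ * ‖gen ρ' nz g‖ := by
    intro f g hf hg mz nz
    rw [norm_gen_eq mz f hf, norm_gen_eq' nz g hg]
    exact Bval_cs hc0 hh1 hhpos hh'1 hh'pos hh₀1 hbound hf hg
  -- well-definedness
  have wd_left : ∀ {F F' G : ℝ → ℂ}, IsFilter F → IsFilter F' → IsFilter G →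
      ∀ k : ℕ, gen ρ k F = gen ρ k F' → Bval h₀ F G = Bval h₀ F' G := by
    intro F F' G hF hF' hG k hk
    have hz : gen ρ k (F + (-1 : ℂ) • F') = 0 := by
      rw [gen_add ρ k hF (hF'.smul _), gen_smul ρ k _ hF', hk]
      simp
    have hb := key_cs (hF.add (hF'.smul (-1))) hG k 0
    rw [hz] at hb
    simp only [norm_zero, mul_zero, zero_mul] at hb
    have h0 : Bval h₀ (F + (-1:ℂ) • F') G = 0 := norm_le_zero_iff.mp hb
    rw [Bval_add_left hh₀1 hF (hF'.smul _) hG, Bval_smul_left] at h0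
    simp only [map_neg, map_one] at h0
    linear_combination h0
  have wd_right : ∀ {F G G' : ℝ → ℂ}, IsFilter F → IsFilter G → IsFilter G' →
      ∀ k : ℕ, gen ρ' k G = gen ρ' k G' → Bval h₀ F G = Bval h₀ F G' := by
    intro F G G' hF hG hG' k hk
    have hz : gen ρ' k (G + (-1 : ℂ) • G') = 0 := by
      rw [gen_add ρ' k hG (hG'.smul _), gen_smul ρ' k _ hG', hk]
      simp
    have hb := key_cs hF (hG.add (hG'.smul (-1))) 0 k
    rw [hz] at hb
    simp only [norm_zero, mul_zero] at hb
    have h0 : Bval h₀ F (G + (-1:ℂ) • G') = 0 := norm_le_zero_iff.mp hb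
    rw [Bval_add_right hh₀1 hF hG (hG'.smul _), Bval_smul_right] at h0
    linear_combination h0
  have bwL : ∀ {m1 m2 : ℕ} {f1 f2 : ℝ → ℂ}, IsFilter f1 → IsFilter f2 →
      gen ρ m1 f1 = gen ρ m2 f2 → ∀ (n : ℕ) (g : ℝ → ℂ), IsFilter g →
      Bfun N m₀ m₀' h₀ m1 f1 n g = Bfun N m₀ m₀' h₀ m2 f2 n g := by
    intro m1 m2 f1 f2 hf1 hf2 heq n g hg
    have hm1K : m1 ≤ max (max m1 m2) n := le_trans (le_max_left _ _) (le_max_left _ _)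
    have hm2K : m2 ≤ max (max m1 m2) n := le_trans (le_max_right _ _) (le_max_left _ _)
    have hnK : n ≤ max (max m1 m2) n := le_max_right _ _
    rw [Bfun_eq hN1 hm₀ hm₀' hh₀1 hh₀eig hm1K hnK hf1 hg,
      Bfun_eq hN1 hm₀ hm₀' hh₀1 hh₀eig hm2K hnK hf2 hg]
    refine wd_left (isFilter_LamIter hm₀ hf1 _) (isFilter_LamIter hm₀ hf2 _)
      (isFilter_LamIter hm₀' hg _) (max (max m1 m2) n) ?_
    rw [← gen_lift_le ρ hm₀ hm1K hf1, ← gen_lift_le ρ hm₀ hm2K hf2, heq]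
  have bwR : ∀ (m : ℕ) (f : ℝ → ℂ), IsFilter f → ∀ {n1 n2 : ℕ} {g1 g2 : ℝ → ℂ},
      IsFilter g1 → IsFilter g2 → gen ρ' n1 g1 = gen ρ' n2 g2 →
      Bfun N m₀ m₀' h₀ m f n1 g1 = Bfun N m₀ m₀' h₀ m f n2 g2 := by
    intro m f hf n1 n2 g1 g2 hg1 hg2 heq
    have hn1K : n1 ≤ max m (max n1 n2) := le_trans (le_max_left _ _) (le_max_right _ _)
    have hn2K : n2 ≤ max m (max n1 n2) := le_trans (le_max_right _ _) (le_max_right _ _)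
    have hmK : m ≤ max m (max n1 n2) := le_max_left _ _
    rw [Bfun_eq hN1 hm₀ hm₀' hh₀1 hh₀eig hmK hn1K hf hg1,
      Bfun_eq hN1 hm₀ hm₀' hh₀1 hh₀eig hmK hn2K hf hg2]
    refine wd_right (isFilter_LamIter hm₀ hf _) (isFilter_LamIter hm₀' hg1 _)
      (isFilter_LamIter hm₀' hg2 _) (max m (max n1 n2)) ?_
    rw [← gen_lift_le ρ' hm₀' hn1K hg1, ← gen_lift_le ρ' hm₀' hn2K hg2, heq]
  -- existence of the weak images of generators
  have exists_v : ∀ (n : ℕ) (g : ℝ → ℂ), IsFilter g → ∃ v : H,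
      (∀ (m : ℕ) (f : ℝ → ℂ), IsFilter f →
        ⟪gen ρ m f, v⟫ = Bfun N m₀ m₀' h₀ m f n g) ∧
      ‖v‖ ≤ Real.sqrt c * ‖gen ρ' n g‖ := by
    intro n g hg
    let pk : (genSub ρ hm₀) → ℕ × (ℝ → ℂ) := fun ξ =>
      ⟨(mem_genSub.mp ξ.2).choose, (mem_genSub.mp ξ.2).choose_spec.choose⟩
    have pks : ∀ ξ : (genSub ρ hm₀), IsFilter (pk ξ).2 ∧ (ξ:H) = gen ρ (pk ξ).1 (pk ξ).2 :=
      fun ξ => (mem_genSub.mp ξ.2).choose_spec.choose_spec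
    let ℓ : (genSub ρ hm₀) → ℂ := fun ξ => conj (Bfun N m₀ m₀' h₀ (pk ξ).1 (pk ξ).2 n g)
    have ℓspec : ∀ (ξ : (genSub ρ hm₀)) (m : ℕ) (f : ℝ → ℂ), IsFilter f →
        (ξ:H) = gen ρ m f → ℓ ξ = conj (Bfun N m₀ m₀' h₀ m f n g) := by
      intro ξ m f hf heq
      have hbw := bwL (pks ξ).1 hf (by rw [← (pks ξ).2, heq]) n g hg
      show conj (Bfun N m₀ m₀' h₀ (pk ξ).1 (pk ξ).2 n g) = _
      rw [hbw]
    have hadd : ∀ ξ ζ : (genSub ρ hm₀), ℓ (ξ + ζ) = ℓ ξ + ℓ ζ := by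
      intro ξ ζ
      have h1 := pks ξ
      have h2 := pks ζ
      have hsum : ((ξ + ζ : (genSub ρ hm₀)) : H)
          = gen ρ (max (pk ξ).1 (pk ζ).1)
            ((Lam N m₀)^[max (pk ξ).1 (pk ζ).1 - (pk ξ).1] (pk ξ).2
              + (Lam N m₀)^[max (pk ξ).1 (pk ζ).1 - (pk ζ).1] (pk ζ).2) := by
        rw [Submodule.coe_add, h1.2, h2.2,
          gen_lift_le ρ hm₀ (le_max_left (pk ξ).1 (pk ζ).1) h1.1,
          gen_lift_le ρ hm₀ (le_max_right (pk ξ).1 (pk ζ).1) h2.1,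
          ← gen_add ρ _ (isFilter_LamIter hm₀ h1.1 _) (isFilter_LamIter hm₀ h2.1 _)]
      rw [ℓspec (ξ+ζ) _ _ ((isFilter_LamIter hm₀ h1.1 _).add (isFilter_LamIter hm₀ h2.1 _)) hsum,
        ℓspec ξ _ _ h1.1 h1.2, ℓspec ζ _ _ h2.1 h2.2,
        Bfun_add_left hN1 hm₀ hm₀' hh₀1 hh₀eig h1.1 h2.1 hg
          (le_max_left (pk ξ).1 (pk ζ).1) (le_max_right (pk ξ).1 (pk ζ).1),
        map_add]
    have hsmul : ∀ (a : ℂ) (ξ : (genSub ρ hm₀)), ℓ (a • ξ) = a * ℓ ξ := by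
      intro a ξ
      have h1 := pks ξ
      have hs : ((a • ξ : (genSub ρ hm₀)) : H) = gen ρ (pk ξ).1 (a • (pk ξ).2) := by
        rw [Submodule.coe_smul, h1.2, gen_smul ρ _ a h1.1]
      rw [ℓspec (a • ξ) _ _ (h1.1.smul a) hs,
        Bfun_smul_left hN1 hm₀ hm₀' hh₀1 hh₀eig a h1.1 hg, map_mul, Complex.conj_conj,
        ℓspec ξ _ _ h1.1 h1.2]
    let L : (genSub ρ hm₀) →ₗ[ℂ] ℂ :=
      { toFun := ℓ, map_add' := hadd, map_smul' := fun a ξ => by simpa using hsmul a ξ }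
    have hLb : ∀ ξ : (genSub ρ hm₀), ‖L ξ‖ ≤ (Real.sqrt c * ‖gen ρ' n g‖) * ‖(ξ : H)‖ := by
      intro ξ
      have h1 := pks ξ
      have hLξ : L ξ = conj (Bfun N m₀ m₀' h₀ (pk ξ).1 (pk ξ).2 n g) := rfl
      rw [hLξ, RCLike.norm_conj,
        Bfun_eq hN1 hm₀ hm₀' hh₀1 hh₀eig (le_max_left (pk ξ).1 n) (le_max_right (pk ξ).1 n)
          h1.1 hg]
      calc ‖Bval h₀ ((Lam N m₀)^[max (pk ξ).1 n - (pk ξ).1] (pk ξ).2)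
            ((Lam N m₀')^[max (pk ξ).1 n - n] g)‖
          ≤ Real.sqrt c
            * ‖gen ρ (max (pk ξ).1 n) ((Lam N m₀)^[max (pk ξ).1 n - (pk ξ).1] (pk ξ).2)‖
            * ‖gen ρ' (max (pk ξ).1 n) ((Lam N m₀')^[max (pk ξ).1 n - n] g)‖ :=
          key_cs (isFilter_LamIter hm₀ h1.1 _) (isFilter_LamIter hm₀' hg _) _ _
        _ = Real.sqrt c * ‖(ξ:H)‖ * ‖gen ρ' n g‖ := by
            rw [← gen_lift_le ρ hm₀ (le_max_left (pk ξ).1 n) h1.1,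
              ← gen_lift_le ρ' hm₀' (le_max_right (pk ξ).1 n) hg, ← h1.2]
        _ = (Real.sqrt c * ‖gen ρ' n g‖) * ‖(ξ:H)‖ := by ring
    obtain ⟨T, hTeq, hTn⟩ := extend_dense_clm (genSub ρ hm₀) hdH L
      (Real.sqrt c * ‖gen ρ' n g‖) (by positivity) hLb
    refine ⟨(InnerProductSpace.toDual ℂ H).symm T, ?_, ?_⟩
    · intro m f hf
      have hmem : gen ρ m f ∈ genSub ρ hm₀ := ⟨m, f, hf, rfl⟩
      have e1 : ⟪((InnerProductSpace.toDual ℂ H).symm T : H), gen ρ m f⟫ = T (gen ρ m f) :=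
        InnerProductSpace.toDual_symm_apply
      have e2 : T (gen ρ m f) = L (⟨gen ρ m f, hmem⟩ : (genSub ρ hm₀)) :=
        hTeq ⟨gen ρ m f, hmem⟩
      have e3 : L (⟨gen ρ m f, hmem⟩ : (genSub ρ hm₀)) = conj (Bfun N m₀ m₀' h₀ m f n g) :=
        ℓspec _ m f hf rfl
      rw [← inner_conj_symm, e1, e2, e3, Complex.conj_conj]
    · rw [LinearIsometryEquiv.norm_map]
      exact hTn
  choose vmap hv1 hv2 using exists_v
  -- assemble the operator on the dense submodule of H'
  let pk' : (genSub ρ' hm₀') → ℕ × (ℝ → ℂ) := fun η =>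
    ⟨(mem_genSub.mp η.2).choose, (mem_genSub.mp η.2).choose_spec.choose⟩
  have pk's : ∀ η : (genSub ρ' hm₀'), IsFilter (pk' η).2 ∧ (η : H') = gen ρ' (pk' η).1 (pk' η).2 :=
    fun η => (mem_genSub.mp η.2).choose_spec.choose_spec
  let Sfun : (genSub ρ' hm₀') → H := fun η => vmap (pk' η).1 (pk' η).2 (pk's η).1
  have Sweak : ∀ (η : (genSub ρ' hm₀')) (nn : ℕ) (gg : ℝ → ℂ), IsFilter gg →
      (η : H') = gen ρ' nn gg → ∀ (m : ℕ) (f : ℝ → ℂ), IsFilter f →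
      ⟪gen ρ m f, Sfun η⟫ = Bfun N m₀ m₀' h₀ m f nn gg := by
    intro η nn gg hgg heq m f hf
    rw [show Sfun η = vmap (pk' η).1 (pk' η).2 (pk's η).1 from rfl,
      hv1 (pk' η).1 (pk' η).2 (pk's η).1 m f hf]
    exact bwR m f hf (pk's η).1 hgg (by rw [← (pk's η).2, heq])
  have Snorm : ∀ η : (genSub ρ' hm₀'), ‖Sfun η‖ ≤ Real.sqrt c * ‖(η : H')‖ := by
    intro η
    have hb := hv2 (pk' η).1 (pk' η).2 (pk's η).1
    calc ‖Sfun η‖ ≤ Real.sqrt c * ‖gen ρ' (pk' η).1 (pk' η).2‖ := hb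
      _ = Real.sqrt c * ‖(η : H')‖ := congrArg (fun t => Real.sqrt c * ‖t‖) (pk's η).2.symm
  have vec_eq : ∀ {v w : H},
      (∀ (m : ℕ) (f : ℝ → ℂ), IsFilter f → ⟪gen ρ m f, v⟫ = ⟪gen ρ m f, w⟫) → v = w := by
    intro v w hvw
    refine dense_eq_of_inner hdH ?_
    rintro x ⟨m, f, hf, rfl⟩
    exact hvw m f hf
  have Sadd : ∀ η ζ : (genSub ρ' hm₀'), Sfun (η + ζ) = Sfun η + Sfun ζ := by
    intro η ζ
    have h1 := pk's η
    have h2 := pk's ζ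
    have hsum : ((η + ζ : (genSub ρ' hm₀')) : H')
        = gen ρ' (max (pk' η).1 (pk' ζ).1)
          ((Lam N m₀')^[max (pk' η).1 (pk' ζ).1 - (pk' η).1] (pk' η).2
            + (Lam N m₀')^[max (pk' η).1 (pk' ζ).1 - (pk' ζ).1] (pk' ζ).2) := by
      rw [Submodule.coe_add, h1.2, h2.2,
        gen_lift_le ρ' hm₀' (le_max_left (pk' η).1 (pk' ζ).1) h1.1,
        gen_lift_le ρ' hm₀' (le_max_right (pk' η).1 (pk' ζ).1) h2.1,
        ← gen_add ρ' _ (isFilter_LamIter hm₀' h1.1 _) (isFilter_LamIter hm₀' h2.1 _)]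
    refine vec_eq ?_
    intro m f hf
    rw [inner_add_right,
      Sweak (η + ζ) _ _ ((isFilter_LamIter hm₀' h1.1 _).add (isFilter_LamIter hm₀' h2.1 _))
        hsum m f hf,
      Sweak η _ _ h1.1 h1.2 m f hf, Sweak ζ _ _ h2.1 h2.2 m f hf]
    exact Bfun_add_right hN1 hm₀ hm₀' hh₀1 hh₀eig hf h1.1 h2.1
      (le_max_left (pk' η).1 (pk' ζ).1) (le_max_right (pk' η).1 (pk' ζ).1)
  have Ssmul : ∀ (a : ℂ) (η : (genSub ρ' hm₀')), Sfun (a • η) = a • Sfun η := by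
    intro a η
    have h1 := pk's η
    have hs : ((a • η : (genSub ρ' hm₀')) : H') = gen ρ' (pk' η).1 (a • (pk' η).2) := by
      rw [Submodule.coe_smul, h1.2, gen_smul ρ' _ a h1.1]
    refine vec_eq ?_
    intro m f hf
    rw [inner_smul_right, Sweak (a • η) _ _ (h1.1.smul a) hs m f hf,
      Sweak η _ _ h1.1 h1.2 m f hf,
      Bfun_smul_right hN1 hm₀ hm₀' hh₀1 hh₀eig a hf h1.1]
  obtain ⟨S, hSeq, hSn⟩ := extend_dense_clm (genSub ρ' hm₀') hdH'
    { toFun := Sfun, map_add' := Sadd, map_smul' := fun a η => by simpa using Ssmul a η }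
    (Real.sqrt c) hsc0 Snorm
  have S_weak : ∀ (m : ℕ) (f : ℝ → ℂ), IsFilter f → ∀ (n : ℕ) (g : ℝ → ℂ), IsFilter g →
      ⟪gen ρ m f, S (gen ρ' n g)⟫ = Bfun N m₀ m₀' h₀ m f n g := by
    intro m f hf n g hg
    have hmem : gen ρ' n g ∈ genSub ρ' hm₀' := ⟨n, g, hg, rfl⟩
    rw [show S (gen ρ' n g) = Sfun ⟨gen ρ' n g, hmem⟩ from hSeq ⟨gen ρ' n g, hmem⟩]
    exact Sweak ⟨gen ρ' n g, hmem⟩ n g hg rfl m f hf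
  -- Property 1 : intertwining with U
  have prop1 : ∀ v : H', S (ρ'.U v) = ρ.U (S v) := by
    have heqon : Set.EqOn (fun v => S (ρ'.U v)) (fun v => ρ.U (S v))
        ((genSub ρ' hm₀' : Submodule ℂ H') : Set H') := by
      rintro x ⟨n, g, hg, rfl⟩
      show S (ρ'.U (gen ρ' n g)) = ρ.U (S (gen ρ' n g))
      refine vec_eq ?_
      intro m f hf
      rw [← inner_usymm ρ, ← gen_succ]
      cases n with
      | zero =>
        rw [U_gen_zero ρ' hm₀' hg, S_weak m f hf 0 (Lam N m₀' g) (isFilter_Lam hm₀' hg),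
          S_weak (m+1) f hf 0 g hg,
          Bfun_lift_right hN1 hm₀ hm₀' hh₀1 hh₀eig hf hg (m := m+1) (n := 0),
          Bfun_succ_succ hN1 hm₀ hm₀' hh₀1 hh₀eig hf (isFilter_Lam hm₀' hg)]
      | succ k =>
        rw [U_gen ρ' k g, S_weak m f hf k g hg, S_weak (m+1) f hf (k+1) g hg,
          Bfun_succ_succ hN1 hm₀ hm₀' hh₀1 hh₀eig hf hg]
    intro v
    exact congrFun (Continuous.ext_on hdH' (S.continuous.comp ρ'.U.continuous)
      (ρ.U.continuous.comp S.continuous) heqon) v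
  -- Property 2 : intertwining with the representation
  have prop2 : ∀ p, IsFilter p → ∀ v : H', S (ρ'.rep p v) = ρ.rep p (S v) := by
    intro p hp
    have heqon : Set.EqOn (fun v => S (ρ'.rep p v)) (fun v => ρ.rep p (S v))
        ((genSub ρ' hm₀' : Submodule ℂ H') : Set H') := by
      rintro x ⟨n, g, hg, rfl⟩
      show S (ρ'.rep p (gen ρ' n g)) = ρ.rep p (S (gen ρ' n g))
      rw [rep_gen ρ' n hp hg]
      refine vec_eq ?_
      intro m f hf
      rw [S_weak m f hf n (dilp N n p * g) ((isFilter_dilp hp).mul hg),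
        inner_rep_right ρ hp, rep_gen ρ m hp.conj hf,
        S_weak m (dilp N m (fun t => conj (p t)) * f) ((isFilter_dilp hp.conj).mul hf) n g hg]
      exact (Bfun_move hN1 hm₀ hm₀' hh₀1 hh₀eig hp hf hg).symm
    intro v
    exact congrFun (Continuous.ext_on hdH' (S.continuous.comp (ρ'.rep p).continuous)
      ((ρ.rep p).continuous.comp S.continuous) heqon) v
  -- Property 3 : the moments
  have prop3 : ∀ f, IsFilter f → ⟪ρ.phi, ρ.rep f (S ρ'.phi)⟫ = circleInt fun x => f x * h₀ x := by
    intro f hf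
    rw [inner_rep_right ρ hf,
      show ρ.rep (fun t => conj (f t)) ρ.phi = gen ρ 0 (fun t => conj (f t)) from rfl,
      show ρ'.phi = gen ρ' 0 1 from (gen_one ρ').symm,
      S_weak 0 _ hf.conj 0 1 isFilter_one, Bfun_zero_zero]
    unfold Bval
    congr 1
    funext x
    simp only [Complex.conj_conj, Pi.one_apply, mul_one]
  -- weak values for any operator with the three properties
  have S'_weak : ∀ S' : H' →L[ℂ] H, (∀ v, S' (ρ'.U v) = ρ.U (S' v)) →
      (∀ f, IsFilter f → S'.comp (ρ'.rep f) = (ρ.rep f).comp S') →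
      (∀ f, IsFilter f → ⟪ρ.phi, ρ.rep f (S' ρ'.phi)⟫ = circleInt fun x => f x * h₀ x) →
      ∀ (m : ℕ) (f : ℝ → ℂ), IsFilter f → ∀ (n : ℕ) (g : ℝ → ℂ), IsFilter g →
      ⟪gen ρ m f, S' (gen ρ' n g)⟫ = Bfun N m₀ m₀' h₀ m f n g := by
    intro S' hU' hrep' hmom'
    have hrepv : ∀ p, IsFilter p → ∀ v : H', S' (ρ'.rep p v) = ρ.rep p (S' v) := by
      intro p hp v
      have := ContinuousLinearMap.ext_iff.mp (hrep' p hp) v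
      simpa using this
    have hUsymm : ∀ w : H', S' (ρ'.U.symm w) = ρ.U.symm (S' w) := by
      intro w
      have h1 := hU' (ρ'.U.symm w)
      rw [ρ'.U.apply_symm_apply] at h1
      rw [h1, ρ.U.symm_apply_apply]
    have hS'gen : ∀ (n : ℕ) (g : ℝ → ℂ), IsFilter g →
        S' (gen ρ' n g) = (fun w => ρ.U.symm w)^[n] (ρ.rep g (S' ρ'.phi)) := by
      intro n g hg
      induction n with
      | zero => exact hrepv g hg ρ'.phi
      | succ k ih =>
        rw [gen_succ, hUsymm, ih, Function.iterate_succ_apply']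
    have base : ∀ (j : ℕ) (F : ℝ → ℂ), IsFilter F →
        ⟪gen ρ j F, S' ρ'.phi⟫ = Bfun N m₀ m₀' h₀ j F 0 1 := by
      intro j
      induction j with
      | zero =>
        intro F hF
        rw [gen_zero_level, inner_rep_left ρ hF, hmom' _ hF.conj, Bfun_zero_zero]
        unfold Bval circleInt
        congr 1
        refine setIntegral_congr_fun measurableSet_Ioc (fun x _ => ?_)
        simp only [Pi.one_apply, mul_one]
      | succ j ih =>
        intro F hF
        rw [gen_succ, inner_usymm ρ]
        have hUphi : ρ.U (S' ρ'.phi) = ρ.rep m₀' (S' ρ'.phi) := by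
          have h1 := hU' ρ'.phi
          rw [ρ'.scaling] at h1
          rw [← h1, hrepv m₀' hm₀' ρ'.phi]
        rw [hUphi, inner_rep_right ρ hm₀', rep_gen ρ j hm₀'.conj hF,
          ih _ ((isFilter_dilp hm₀'.conj).mul hF),
          Bfun_move hN1 hm₀ hm₀' hh₀1 hh₀eig hm₀' hF isFilter_one,
          show dilp N 0 m₀' * 1 = Lam N m₀' 1 from by funext x; simp [dilp, Lam]]
        calc Bfun N m₀ m₀' h₀ j F 0 (Lam N m₀' 1)
            = Bfun N m₀ m₀' h₀ (j+1) F (0+1) (Lam N m₀' 1) :=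
              (Bfun_succ_succ hN1 hm₀ hm₀' hh₀1 hh₀eig hF
                (isFilter_Lam hm₀' isFilter_one)).symm
          _ = Bfun N m₀ m₀' h₀ (j+1) F 0 1 :=
              (Bfun_lift_right hN1 hm₀ hm₀' hh₀1 hh₀eig hF isFilter_one).symm
    intro m f hf n g hg
    rw [hS'gen n g hg]
    have hmK : m ≤ max m n := le_max_left m n
    have hnK : n ≤ max m n := le_max_right m n
    have hsplit : gen ρ (max m n) ((Lam N m₀)^[max m n - m] f)
        = (fun w => ρ.U.symm w)^[n] (gen ρ (max m n - n) ((Lam N m₀)^[max m n - m] f)) := by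
      unfold gen
      rw [← Function.iterate_add_apply, show n + (max m n - n) = max m n from by omega]
    rw [gen_lift_le ρ hm₀ hmK hf, hsplit, iter_symm_inner,
      inner_rep_right ρ hg, rep_gen ρ (max m n - n) hg.conj (isFilter_LamIter hm₀ hf _),
      base _ _ ((isFilter_dilp hg.conj).mul (isFilter_LamIter hm₀ hf _)),
      Bfun_move hN1 hm₀ hm₀' hh₀1 hh₀eig hg (isFilter_LamIter hm₀ hf _) isFilter_one,
      show dilp N 0 g * 1 = g from by funext x; simp [dilp],
      Bfun_eq hN1 hm₀ hm₀' hh₀1 hh₀eig (le_refl (max m n - n)) (Nat.zero_le _)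
        (isFilter_LamIter hm₀ hf _) hg,
      Bfun_eq hN1 hm₀ hm₀' hh₀1 hh₀eig hmK hnK hf hg,
      show max m n - n - (max m n - n) = 0 from by omega,
      show max m n - n - 0 = max m n - n from by omega,
      Function.iterate_zero_apply]
  -- conclusion
  refine ⟨S, ⟨prop1, fun f hf => ContinuousLinearMap.ext (fun v => prop2 f hf v), prop3⟩,
    hSn, ?_⟩
  rintro S' ⟨h1, h2, h3⟩
  refine ContinuousLinearMap.ext_on ρ'.cyclic ?_
  rintro x ⟨n, g, hg, rfl⟩
  show S' (gen ρ' n g) = S (gen ρ' n g)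
  refine vec_eq ?_
  intro m f hf
  rw [S'_weak S' h1 h2 h3 m f hf n g hg, S_weak m f hf n g hg]
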